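/- arXiv:2007.10911 — 10 statements merged into one kernel-verified Lean document; each statement's English description precedes it below -/
import Mathlib

section
/- Let d ≥ 1, γ ∈ (0,1), x⁰ ∈ ℝ^d, and let ψ : ℝ^d × ℝ → ℝ^d and φ : ℝ^d × ℝ → ℝ be bounded, locally Lipschitz continuous functions with φ(x,0) > 0 for every x ∈ ℝ^d. Then there exists a unique pair of continuous functions X : [0,∞) → ℝ^d and Y : [0,∞) → ℝ such that Y(t) > 0 for all t > 0, X(0) = x⁰, Y(0) = 0, and for all t ≥ 0: X(t) = x⁰ + ∫₀ᵗ ψ(X(s),Y(s)) ds and Y(t) = ∫₀ᵗ φ(X(s),Y(s)) Y(s)^γ ds. -/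
open MeasureTheory Set
open Metric Filter Topology
open scoped NNReal

lemma locLip_lipschitzOnWith_of_isCompact {E F : Type*} [MetricSpace E] [MetricSpace F]
    {f : E → F} (hf : LocallyLipschitz f) {K : Set E} (hK : IsCompact K) :
    ∃ C : ℝ≥0, LipschitzOnWith C f K := by
  rcases K.eq_empty_or_nonempty with rfl | hKne
  · exact ⟨0, fun x hx => hx.elim⟩
  have hfc : Continuous f := hf.continuous
  choose L t ht hL using hf
  choose r hr hball using fun x => Metric.mem_nhds_iff.1 (ht x)
  obtain ⟨s, hsK, hsfin, hscov⟩ :=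
    hK.elim_finite_subcover_image (c := fun x => ball x (r x / 2))
      (fun x _ => isOpen_ball)
      (fun x hx => mem_iUnion₂.2 ⟨x, hx, mem_ball_self (half_pos (hr x))⟩)
  have hsne : s.Nonempty := by
    rcases hKne with ⟨x, hx⟩
    rcases mem_iUnion₂.1 (hscov hx) with ⟨z, hz, _⟩
    exact ⟨z, hz⟩
  classical
  set S := hsfin.toFinset with hS
  have hSne : S.Nonempty := by simpa [hS] using hsne
  set δ : ℝ := S.inf' hSne (fun z => r z / 2) with hδ
  have hδpos : 0 < δ := by
    rw [hδ]
    exact (Finset.lt_inf'_iff hSne).2 fun z _ => half_pos (hr z)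
  obtain ⟨B, hB⟩ := Metric.isBounded_iff.1 (hK.image hfc).isBounded
  have hB0 : 0 ≤ B := by
    rcases hKne with ⟨x, hx⟩
    have := hB (mem_image_of_mem f hx) (mem_image_of_mem f hx)
    simpa using this
  set Lmax : ℝ≥0 := S.sup' hSne (fun z => L z) with hLmax
  refine ⟨Lmax ⊔ (B / δ).toNNReal, lipschitzOnWith_iff_dist_le_mul.2 ?_⟩
  intro x hx y hy
  have hC : ((Lmax ⊔ (B / δ).toNNReal : ℝ≥0) : ℝ) = max (Lmax : ℝ) ((B/δ).toNNReal : ℝ) := by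
    push_cast; rfl
  rcases le_or_gt δ (dist x y) with hd | hd
  · have h1 : dist (f x) (f y) ≤ B := hB (mem_image_of_mem f hx) (mem_image_of_mem f hy)
    have h2 : B ≤ B / δ * dist x y := by
      rw [div_mul_eq_mul_div, le_div_iff₀ hδpos]
      exact mul_le_mul_of_nonneg_left hd hB0
    have h3 : (B / δ) ≤ ((Lmax ⊔ (B / δ).toNNReal : ℝ≥0) : ℝ) := by
      rw [hC]
      exact le_max_of_le_right (Real.coe_toNNReal (B/δ) (by positivity)).symm.le
    calc dist (f x) (f y) ≤ B := h1
      _ ≤ B / δ * dist x y := h2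
      _ ≤ _ := mul_le_mul_of_nonneg_right h3 dist_nonneg
  · rcases mem_iUnion₂.1 (hscov hx) with ⟨z, hz, hxz⟩
    have hzS : z ∈ S := by simpa [hS] using hz
    have hδz : δ ≤ r z / 2 := Finset.inf'_le _ hzS
    have hxz' : dist x z < r z / 2 := mem_ball.1 hxz
    have hxt : x ∈ t z := hball z (mem_ball.2 (by linarith [hr z]))
    have hyt : y ∈ t z := by
      refine hball z (mem_ball.2 ?_)
      have h4 : dist y z ≤ dist y x + dist x z := dist_triangle _ _ _
      rw [dist_comm y x] at h4
      linarith
    have h5 := (hL z).dist_le_mul x hxt y hyt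
    have h6 : (L z : ℝ) ≤ ((Lmax ⊔ (B / δ).toNNReal : ℝ≥0) : ℝ) := by
      rw [hC]
      refine le_max_of_le_left ?_
      exact_mod_cast NNReal.coe_le_coe.2 (Finset.le_sup' (fun z => L z) hzS)
    calc dist (f x) (f y) ≤ (L z : ℝ) * dist x y := h5
      _ ≤ _ := mul_le_mul_of_nonneg_right h6 dist_nonneg

noncomputable def posPow (p : ℝ) (z : ℝ) : ℝ := (max z 0) ^ p

lemma posPow_zero {p : ℝ} (hp : p ≠ 0) : posPow p 0 = 0 := by
  simp [posPow, Real.zero_rpow hp]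

lemma posPow_of_nonneg (p : ℝ) {z : ℝ} (hz : 0 ≤ z) : posPow p z = z ^ p := by
  simp [posPow, max_eq_left hz]

lemma posPow_pos {p : ℝ} {z : ℝ} (hz : 0 < z) : 0 < posPow p z := by
  rw [posPow_of_nonneg p hz.le]; exact Real.rpow_pos_of_pos hz p

lemma posPow_lipschitzOnWith {p R : ℝ} (hp : 1 ≤ p) (hR : 0 ≤ R) :
    LipschitzOnWith (p * R ^ (p - 1)).toNNReal (posPow p) (closedBall (0:ℝ) R) := by
  have key : ∀ a ∈ Icc (0:ℝ) R, ∀ b ∈ Icc (0:ℝ) R,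
      |a ^ p - b ^ p| ≤ p * R ^ (p-1) * |a - b| := by
    intro a ha b hb
    have hderiv : ∀ x ∈ Icc (0:ℝ) R,
        HasDerivWithinAt (fun z : ℝ => z ^ p) (p * x ^ (p-1)) (Icc 0 R) x := fun x _ =>
      (Real.hasDerivAt_rpow_const (Or.inr hp)).hasDerivWithinAt
    have hbound : ∀ x ∈ Icc (0:ℝ) R, ‖p * x ^ (p-1)‖ ≤ p * R ^ (p-1) := by
      intro x hx
      rw [Real.norm_eq_abs, abs_mul, abs_of_nonneg (by linarith : (0:ℝ) ≤ p),
        abs_of_nonneg (Real.rpow_nonneg hx.1 _)]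
      exact mul_le_mul_of_nonneg_left
        (Real.rpow_le_rpow hx.1 hx.2 (by linarith)) (by linarith)
    have := (convex_Icc (0:ℝ) R).norm_image_sub_le_of_norm_hasDerivWithin_le
      hderiv hbound hb ha
    simpa [Real.norm_eq_abs] using this
  refine lipschitzOnWith_iff_dist_le_mul.2 fun x hx y hy => ?_
  have hxR : max x 0 ∈ Icc (0:ℝ) R := by
    simp only [mem_closedBall, Real.dist_eq, sub_zero] at hx
    exact ⟨le_max_right _ _, max_le (le_of_abs_le hx) hR⟩
  have hyR : max y 0 ∈ Icc (0:ℝ) R := by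
    simp only [mem_closedBall, Real.dist_eq, sub_zero] at hy
    exact ⟨le_max_right _ _, max_le (le_of_abs_le hy) hR⟩
  have h1 : dist (posPow p x) (posPow p y) ≤ p * R ^ (p-1) * |max x 0 - max y 0| := by
    rw [Real.dist_eq]
    exact key _ hxR _ hyR
  have h2 : |max x 0 - max y 0| ≤ |x - y| := abs_max_sub_max_le_abs _ _ _
  have h3 : ((p * R ^ (p - 1)).toNNReal : ℝ) = p * R ^ (p-1) :=
    Real.coe_toNNReal _ (by positivity)
  rw [Real.dist_eq, h3]
  calc dist (posPow p x) (posPow p y) ≤ p * R ^ (p-1) * |max x 0 - max y 0| := h1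
    _ ≤ p * R ^ (p-1) * |x - y| := by
        refine mul_le_mul_of_nonneg_left h2 (by positivity)

lemma posPow_locallyLipschitz {p : ℝ} (hp : 1 ≤ p) : LocallyLipschitz (posPow p) := by
  intro x
  refine ⟨(p * (|x|+1) ^ (p - 1)).toNNReal, closedBall x 1, closedBall_mem_nhds x one_pos, ?_⟩
  refine (posPow_lipschitzOnWith hp (by positivity)).mono ?_
  intro y hy
  simp only [mem_closedBall, Real.dist_eq, sub_zero] at *
  calc |y| = |y - x + x| := by ring_nf
    _ ≤ |y - x| + |x| := abs_add_le _ _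
    _ ≤ |x| + 1 := by linarith

lemma posPow_continuous {p : ℝ} (hp : 1 ≤ p) : Continuous (posPow p) :=
  (posPow_locallyLipschitz hp).continuous

structure Setup (d : ℕ) : Type where
  γ : ℝ
  hγ0 : 0 < γ
  hγ1 : γ < 1
  x0 : EuclideanSpace ℝ (Fin d)
  ψ : EuclideanSpace ℝ (Fin d) × ℝ → EuclideanSpace ℝ (Fin d)
  φ : EuclideanSpace ℝ (Fin d) × ℝ → ℝ
  Mψ : ℝ
  Mφ : ℝ
  hψb : ∀ p, ‖ψ p‖ ≤ Mψ
  hφb : ∀ p, |φ p| ≤ Mφ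
  hψl : LocallyLipschitz ψ
  hφl : LocallyLipschitz φ
  hφpos : ∀ x, 0 < φ (x, 0)

namespace Setup
variable {d : ℕ} (S : Setup d)

lemma hγ' : 0 < 1 - S.γ := by linarith [S.hγ1]

noncomputable def p : ℝ := (1 - S.γ)⁻¹

lemma hp_mul : S.p * (1 - S.γ) = 1 := inv_mul_cancel₀ (ne_of_gt S.hγ')

lemma hp1 : 1 < S.p := by
  rw [p]
  exact (one_lt_inv₀ S.hγ').2 (by linarith [S.hγ0])

lemma hpγ : S.p * S.γ = S.p - 1 := by
  have h := S.hp_mul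
  nlinarith

/-- transformed second coordinate back to `y` -/
noncomputable def g : ℝ → ℝ := posPow S.p

lemma g_zero : S.g 0 = 0 := posPow_zero (by linarith [S.hp1] : S.p ≠ 0)

lemma g_pos {z : ℝ} (hz : 0 < z) : 0 < S.g z := posPow_pos hz

lemma g_continuous : Continuous S.g := posPow_continuous S.hp1.le

lemma g_locallyLipschitz : LocallyLipschitz S.g := posPow_locallyLipschitz S.hp1.le

lemma g_inverse {y : ℝ} (hy : 0 ≤ y) : S.g (y ^ (1 - S.γ)) = y := by
  rw [g, posPow_of_nonneg _ (Real.rpow_nonneg hy _), ← Real.rpow_mul hy,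
    mul_comm, S.hp_mul, Real.rpow_one]

lemma g_rpow_γ {z : ℝ} (hz : 0 ≤ z) : (S.g z) ^ S.γ = z ^ (S.p - 1) := by
  rw [g, posPow_of_nonneg _ hz, ← Real.rpow_mul hz, S.hpγ]

/-- the transformed (Lipschitz) vector field -/
noncomputable def vf (q : EuclideanSpace ℝ (Fin d) × ℝ) : EuclideanSpace ℝ (Fin d) × ℝ :=
  (S.ψ (q.1, S.g q.2), (1 - S.γ) * S.φ (q.1, S.g q.2))

noncomputable def C0 : ℝ := max S.Mψ ((1 - S.γ) * S.Mφ)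

lemma hMψ0 : 0 ≤ S.Mψ := le_trans (norm_nonneg _) (S.hψb (S.x0, 0))

lemma hMφ0 : 0 ≤ S.Mφ := le_trans (abs_nonneg _) (S.hφb (S.x0, 0))

lemma C0_nonneg : 0 ≤ S.C0 := le_trans S.hMψ0 (le_max_left _ _)

lemma vf_norm_le (q : EuclideanSpace ℝ (Fin d) × ℝ) : ‖S.vf q‖ ≤ S.C0 := by
  rw [vf, Prod.norm_def]
  apply max_le_max
  · exact S.hψb _
  · rw [Real.norm_eq_abs, abs_mul, abs_of_nonneg S.hγ'.le]
    exact mul_le_mul_of_nonneg_left (S.hφb _) S.hγ'.le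

lemma vf_locallyLipschitz : LocallyLipschitz S.vf := by
  have h1 : LocallyLipschitz (fun q : EuclideanSpace ℝ (Fin d) × ℝ => (q.1, S.g q.2)) :=
    LocallyLipschitz.prodMk (LipschitzWith.prod_fst.locallyLipschitz)
      (S.g_locallyLipschitz.comp LipschitzWith.prod_snd.locallyLipschitz)
  have h2 : LocallyLipschitz (fun y : ℝ => (1 - S.γ) * y) := by
    refine (LipschitzWith.of_dist_le_mul (K := ‖1 - S.γ‖₊) fun a b => ?_).locallyLipschitz
    rw [Real.dist_eq, Real.dist_eq, ← mul_sub, abs_mul, coe_nnnorm, Real.norm_eq_abs]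
  exact LocallyLipschitz.prodMk ((S.hψl.comp h1))
    (h2.comp (S.hφl.comp h1))

def SolOn (f : ℝ → EuclideanSpace ℝ (Fin d) × ℝ) (T : ℝ) : Prop :=
  f 0 = (S.x0, 0) ∧ ContinuousOn f (Icc 0 T) ∧
    ∀ t ∈ Icc 0 T, HasDerivWithinAt f (S.vf (f t)) (Icc 0 T) t

lemma exists_solOn {T : ℝ} (hT : 0 < T) : ∃ f, S.SolOn f T := by
  obtain ⟨L, hL⟩ := locLip_lipschitzOnWith_of_isCompact S.vf_locallyLipschitz
    (isCompact_closedBall ((S.x0, (0:ℝ))) (S.C0 * T))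
  have hR : ((S.C0 * T).toNNReal : ℝ) = S.C0 * T := Real.coe_toNNReal _ (mul_nonneg S.C0_nonneg hT.le)
  have hC : (S.C0.toNNReal : ℝ) = S.C0 := Real.coe_toNNReal _ S.C0_nonneg
  have hpl : IsPicardLindelof (fun _ q => S.vf q) (tmin := 0) (tmax := T)
      ⟨0, left_mem_Icc.2 hT.le⟩ (S.x0, 0) (S.C0 * T).toNNReal 0 S.C0.toNNReal L :=
    { lipschitzOnWith := fun t _ => by rw [hR]; exact hL
      continuousOn := fun x _ => continuousOn_const
      norm_le := fun t _ x _ => by rw [hC]; exact S.vf_norm_le x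
      mul_max_le := by
        rw [hC, hR]; simp [max_eq_left hT.le] }
  obtain ⟨f, hf0, hf⟩ := hpl.exists_eq_forall_mem_Icc_hasDerivWithinAt₀
  exact ⟨f, hf0, fun t ht => (hf t ht).continuousWithinAt, hf⟩

lemma SolOn.mem_ball {S : Setup d} {f : ℝ → EuclideanSpace ℝ (Fin d) × ℝ} {T : ℝ}
    (hf : S.SolOn f T) {t : ℝ} (ht : t ∈ Icc 0 T) :
    f t ∈ closedBall ((S.x0, (0:ℝ))) (S.C0 * T) := by
  have h0 : (0:ℝ) ∈ Icc (0:ℝ) T := left_mem_Icc.2 (ht.1.trans ht.2)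
  have h := (convex_Icc (0:ℝ) T).norm_image_sub_le_of_norm_hasDerivWithin_le
    hf.2.2 (fun x _ => S.vf_norm_le _) h0 ht
  rw [mem_closedBall, dist_eq_norm, ← hf.1]
  calc ‖f t - f 0‖ ≤ S.C0 * ‖t - 0‖ := h
    _ ≤ S.C0 * T := by
        rw [sub_zero, Real.norm_eq_abs, abs_of_nonneg ht.1]
        exact mul_le_mul_of_nonneg_left ht.2 S.C0_nonneg

lemma SolOn.mono {S : Setup d} {f : ℝ → EuclideanSpace ℝ (Fin d) × ℝ} {T T' : ℝ}
    (hf : S.SolOn f T') (hT : T ≤ T') : S.SolOn f T :=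
  ⟨hf.1, hf.2.1.mono (Icc_subset_Icc_right hT), fun t ht =>
    (hf.2.2 t (Icc_subset_Icc_right hT ht)).mono (Icc_subset_Icc_right hT)⟩

lemma SolOn.hasDerivWithinAt_Ici {S : Setup d} {f : ℝ → EuclideanSpace ℝ (Fin d) × ℝ} {T : ℝ}
    (hf : S.SolOn f T) {t : ℝ} (ht : t ∈ Ico 0 T) :
    HasDerivWithinAt f (S.vf (f t)) (Ici t) t := by
  refine (hf.2.2 t (Ico_subset_Icc_self ht)).mono_of_mem_nhdsWithin ?_
  have h1 : Iio T ∈ 𝓝[Ici t] t := nhdsWithin_le_nhds (Iio_mem_nhds ht.2)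
  refine mem_of_superset (inter_mem self_mem_nhdsWithin h1) ?_
  rintro x ⟨hx1, hx2⟩
  exact ⟨le_trans ht.1 hx1, le_of_lt hx2⟩

lemma SolOn.unique {S : Setup d} {f g' : ℝ → EuclideanSpace ℝ (Fin d) × ℝ} {T : ℝ}
    (hf : S.SolOn f T) (hg : S.SolOn g' T) : EqOn f g' (Icc 0 T) := by
  obtain ⟨K, hK⟩ := locLip_lipschitzOnWith_of_isCompact S.vf_locallyLipschitz
    (isCompact_closedBall ((S.x0, (0:ℝ))) (S.C0 * T))
  exact ODE_solution_unique_of_mem_Icc_right (v := fun _ q => S.vf q)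
    (s := fun _ => closedBall ((S.x0, (0:ℝ))) (S.C0 * T)) (fun t _ => hK)
    hf.2.1 (fun t ht => hf.hasDerivWithinAt_Ici ht)
    (fun t ht => hf.mem_ball (Ico_subset_Icc_self ht))
    hg.2.1 (fun t ht => hg.hasDerivWithinAt_Ici ht)
    (fun t ht => hg.mem_ball (Ico_subset_Icc_self ht))
    (by rw [hf.1, hg.1])

noncomputable def sol (n : ℕ) : ℝ → EuclideanSpace ℝ (Fin d) × ℝ :=
  Classical.choose (S.exists_solOn (T := (n:ℝ)+1) (by positivity))

lemma sol_spec (n : ℕ) : S.SolOn (S.sol n) ((n:ℝ)+1) :=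
  Classical.choose_spec (S.exists_solOn (T := (n:ℝ)+1) (by positivity))

noncomputable def glob : ℝ → EuclideanSpace ℝ (Fin d) × ℝ := fun t => S.sol ⌊t⌋₊ t

lemma sol_agree (m n : ℕ) {t : ℝ} (h1 : t ∈ Icc 0 ((m:ℝ)+1)) (h2 : t ∈ Icc 0 ((n:ℝ)+1)) :
    S.sol m t = S.sol n t := by
  have h3 := (S.sol_spec m).mono (min_le_left ((m:ℝ)+1) ((n:ℝ)+1))
  have h4 := (S.sol_spec n).mono (min_le_right ((m:ℝ)+1) ((n:ℝ)+1))
  exact h3.unique h4 ⟨h1.1, le_min h1.2 h2.2⟩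

lemma glob_eq_sol (n : ℕ) {t : ℝ} (ht : t ∈ Icc 0 ((n:ℝ)+1)) : S.glob t = S.sol n t := by
  refine S.sol_agree _ n ⟨ht.1, ?_⟩ ht
  exact (Nat.lt_floor_add_one t).le

lemma glob_zero : S.glob 0 = (S.x0, 0) := by
  rw [glob]
  exact (S.sol_spec _).1

lemma glob_continuousOn : ContinuousOn S.glob (Ici 0) := by
  intro t ht
  set n := ⌊t⌋₊ with hn
  have htn : t < (n:ℝ) + 1 := Nat.lt_floor_add_one t
  have hmem : Icc (0:ℝ) ((n:ℝ)+1) ∈ 𝓝[Ici 0] t := by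
    refine mem_of_superset
      (inter_mem self_mem_nhdsWithin (nhdsWithin_le_nhds (Iio_mem_nhds htn))) ?_
    rintro x ⟨hx1, hx2⟩
    exact ⟨hx1, hx2.le⟩
  have hc : ContinuousWithinAt (S.sol n) (Ici 0) t :=
    ((S.sol_spec n).2.1.continuousWithinAt ⟨ht, htn.le⟩).mono_of_mem_nhdsWithin hmem
  refine hc.congr_of_eventuallyEq ?_ (S.glob_eq_sol n ⟨ht, htn.le⟩)
  filter_upwards [hmem] with x hx
  exact S.glob_eq_sol n hx

lemma glob_hasDerivAt {t : ℝ} (ht : 0 < t) : HasDerivAt S.glob (S.vf (S.glob t)) t := by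
  set n := ⌊t⌋₊ with hn
  have htn : t < (n:ℝ) + 1 := Nat.lt_floor_add_one t
  have hIcc : Icc (0:ℝ) ((n:ℝ)+1) ∈ 𝓝 t := Icc_mem_nhds ht htn
  have hd : HasDerivAt (S.sol n) (S.vf (S.sol n t)) t :=
    ((S.sol_spec n).2.2 t ⟨ht.le, htn.le⟩).hasDerivAt hIcc
  have hev : S.glob =ᶠ[𝓝 t] S.sol n := by
    filter_upwards [hIcc] with x hx
    exact S.glob_eq_sol n hx
  rw [S.glob_eq_sol n ⟨ht.le, htn.le⟩]
  exact hd.congr_of_eventuallyEq hev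

noncomputable def Xf : ℝ → EuclideanSpace ℝ (Fin d) := fun t => (S.glob t).1
noncomputable def Zf : ℝ → ℝ := fun t => (S.glob t).2
noncomputable def Yf : ℝ → ℝ := fun t => S.g (S.Zf t)

lemma Xf_zero : S.Xf 0 = S.x0 := by rw [Xf, S.glob_zero]
lemma Zf_zero : S.Zf 0 = 0 := by rw [Zf, S.glob_zero]
lemma Yf_zero : S.Yf 0 = 0 := by rw [Yf, S.Zf_zero, S.g_zero]

lemma Xf_continuousOn : ContinuousOn S.Xf (Ici 0) :=
  continuous_fst.comp_continuousOn S.glob_continuousOn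
lemma Zf_continuousOn : ContinuousOn S.Zf (Ici 0) :=
  continuous_snd.comp_continuousOn S.glob_continuousOn
lemma Yf_continuousOn : ContinuousOn S.Yf (Ici 0) :=
  S.g_continuous.comp_continuousOn S.Zf_continuousOn

lemma Xf_hasDerivAt {t : ℝ} (ht : 0 < t) : HasDerivAt S.Xf (S.ψ (S.Xf t, S.Yf t)) t :=
  (ContinuousLinearMap.fst ℝ (EuclideanSpace ℝ (Fin d)) ℝ).hasFDerivAt.comp_hasDerivAt t
    (S.glob_hasDerivAt ht)

lemma Zf_hasDerivAt {t : ℝ} (ht : 0 < t) :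
    HasDerivAt S.Zf ((1 - S.γ) * S.φ (S.Xf t, S.Yf t)) t :=
  (ContinuousLinearMap.snd ℝ (EuclideanSpace ℝ (Fin d)) ℝ).hasFDerivAt.comp_hasDerivAt t
    (S.glob_hasDerivAt ht)

lemma Zf_hasDerivWithinAt_zero :
    HasDerivWithinAt S.Zf ((1 - S.γ) * S.φ (S.x0, 0)) (Icc 0 1) 0 := by
  have hcast : ((0:ℕ):ℝ) + 1 = 1 := by norm_num
  have hd := (S.sol_spec 0).2.2 0 (by rw [hcast]; norm_num)
  rw [hcast] at hd
  have hd2 : HasDerivWithinAt (fun t => (S.sol 0 t).2)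
      ((S.vf (S.sol 0 0)).2) (Icc (0:ℝ) 1) 0 :=
    (ContinuousLinearMap.snd ℝ (EuclideanSpace ℝ (Fin d)) ℝ).hasFDerivAt.comp_hasDerivWithinAt 0 hd
  have heq : ∀ y ∈ Icc (0:ℝ) 1, S.Zf y = (S.sol 0 y).2 := by
    intro y hy
    rw [Zf, S.glob_eq_sol 0 (by rw [hcast]; exact hy)]
  have hval : (S.vf (S.sol 0 0)).2 = (1 - S.γ) * S.φ (S.x0, 0) := by
    rw [(S.sol_spec 0).1, vf]
    simp [S.g_zero]
  rw [← hval]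
  have := hd2.congr heq (heq 0 (by norm_num))
  simpa using this

lemma Zf_pos {t : ℝ} (htpos : 0 < t) : 0 < S.Zf t := by
  have ha : 0 < (1 - S.γ) * S.φ (S.x0, 0) := mul_pos S.hγ' (S.hφpos _)
  have hd0 := S.Zf_hasDerivWithinAt_zero
  rw [hasDerivWithinAt_iff_tendsto_slope, Icc_diff_left,
    nhdsWithin_Ioc_eq_nhdsGT zero_lt_one] at hd0
  have hev2 : ∀ᶠ x in 𝓝[>] (0:ℝ), 0 < S.Zf x := by
    filter_upwards [hd0.eventually (eventually_gt_nhds ha), self_mem_nhdsWithin] with x hx hx0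
    rw [slope_def_field, S.Zf_zero, sub_zero, sub_zero] at hx
    have := mul_pos hx (show (0:ℝ) < x from hx0)
    rwa [div_mul_cancel₀ _ (ne_of_gt (show (0:ℝ) < x from hx0))] at this
  obtain ⟨u, hu, hsub⟩ := mem_nhdsGT_iff_exists_Ioo_subset.1 hev2
  set δ := u with hδdef
  have hδpos : 0 < δ := hu
  by_contra hcon
  push_neg at hcon
  set Sset := {s : ℝ | 0 < s ∧ S.Zf s ≤ 0} with hSset
  have hne : Sset.Nonempty := ⟨t, htpos, hcon⟩
  have hbdd : BddBelow Sset := ⟨0, fun s hs => hs.1.le⟩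
  set t₁ := sInf Sset with ht₁def
  have hδt₁ : δ ≤ t₁ := by
    refine le_csInf hne fun s hs => ?_
    by_contra hlt
    push_neg at hlt
    exact absurd hs.2 (not_le.2 (hsub ⟨hs.1, hlt⟩))
  have ht₁pos : 0 < t₁ := lt_of_lt_of_le hδpos hδt₁
  have hcontAt : ContinuousAt S.Zf t₁ :=
    S.Zf_continuousOn.continuousAt (Ici_mem_nhds ht₁pos)
  have hZt₁le : S.Zf t₁ ≤ 0 := by
    obtain ⟨w, _, hw_t, hw_mem⟩ := exists_seq_tendsto_sInf hne hbdd
    exact le_of_tendsto (hcontAt.tendsto.comp hw_t)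
      (Filter.Eventually.of_forall fun k => (hw_mem k).2)
  have hpos_lt : ∀ x ∈ Ioo 0 t₁, 0 < S.Zf x := by
    intro x hx
    by_contra h
    push_neg at h
    exact absurd (csInf_le hbdd ⟨hx.1, h⟩) (not_le.2 hx.2)
  have hIoo : Ioo 0 t₁ ∈ 𝓝[<] t₁ := Ioo_mem_nhdsLT ht₁pos
  have hZt₁ge : 0 ≤ S.Zf t₁ := by
    refine ge_of_tendsto (hcontAt.tendsto.mono_left (nhdsWithin_le_nhds : 𝓝[Iio t₁] t₁ ≤ 𝓝 t₁)) ?_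
    filter_upwards [hIoo] with x hx
    exact (hpos_lt x hx).le
  have hZt₁ : S.Zf t₁ = 0 := le_antisymm hZt₁le hZt₁ge
  have hb : 0 < (1 - S.γ) * S.φ (S.Xf t₁, 0) := mul_pos S.hγ' (S.hφpos _)
  have hder : HasDerivAt S.Zf ((1 - S.γ) * S.φ (S.Xf t₁, 0)) t₁ := by
    have := S.Zf_hasDerivAt ht₁pos
    rwa [show S.Yf t₁ = 0 by rw [Yf, hZt₁, S.g_zero]] at this
  rw [hasDerivAt_iff_tendsto_slope] at hder
  have hmono : Tendsto (slope S.Zf t₁) (𝓝[<] t₁) (𝓝 ((1 - S.γ) * S.φ (S.Xf t₁, 0))) :=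
    hder.mono_left (nhdsWithin_mono _ fun x hx => ne_of_lt hx)
  have hle : (1 - S.γ) * S.φ (S.Xf t₁, 0) ≤ 0 := by
    refine le_of_tendsto hmono ?_
    filter_upwards [hIoo] with x hx
    rw [slope_def_field, hZt₁, sub_zero]
    exact div_nonpos_of_nonneg_of_nonpos (hpos_lt x hx).le (by linarith [hx.2])
  exact absurd hle (not_le.2 hb)

lemma Yf_pos {t : ℝ} (ht : 0 < t) : 0 < S.Yf t := S.g_pos (S.Zf_pos ht)

lemma integrand_X_continuousOn :
    ContinuousOn (fun s => S.ψ (S.Xf s, S.Yf s)) (Ici 0) :=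
  S.hψl.continuous.comp_continuousOn (S.Xf_continuousOn.prodMk S.Yf_continuousOn)

lemma integrand_Y_continuousOn :
    ContinuousOn (fun s => S.φ (S.Xf s, S.Yf s) * (S.Yf s) ^ S.γ) (Ici 0) := by
  have hrpow : Continuous fun y : ℝ => y ^ S.γ :=
    continuous_iff_continuousAt.2 fun y => Real.continuousAt_rpow_const y S.γ (Or.inr S.hγ0.le)
  exact (S.hφl.continuous.comp_continuousOn (S.Xf_continuousOn.prodMk S.Yf_continuousOn)).mul
    (hrpow.comp_continuousOn S.Yf_continuousOn)

lemma Xf_integral {t : ℝ} (ht : 0 ≤ t) :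
    S.Xf t = S.x0 + ∫ s in (0:ℝ)..t, S.ψ (S.Xf s, S.Yf s) := by
  have hFTC := intervalIntegral.integral_eq_sub_of_hasDeriv_right_of_le ht
    (S.Xf_continuousOn.mono Icc_subset_Ici_self)
    (fun x hx => (S.Xf_hasDerivAt hx.1).hasDerivWithinAt)
    ((by rw [uIcc_of_le ht]; exact S.integrand_X_continuousOn.mono Icc_subset_Ici_self :
      ContinuousOn _ (uIcc 0 t)).intervalIntegrable)
  rw [hFTC, S.Xf_zero]
  abel

lemma Yf_hasDerivAt {t : ℝ} (ht : 0 < t) :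
    HasDerivAt S.Yf (S.φ (S.Xf t, S.Yf t) * (S.Yf t) ^ S.γ) t := by
  have hZ := S.Zf_hasDerivAt ht
  have hZpos := S.Zf_pos ht
  have hcont : ContinuousAt S.Zf t := S.Zf_continuousOn.continuousAt (Ici_mem_nhds ht)
  have hev : S.Yf =ᶠ[𝓝 t] fun s => (S.Zf s) ^ S.p := by
    filter_upwards [hcont.eventually (eventually_gt_nhds hZpos)] with s hs
    rw [Yf, g, posPow_of_nonneg _ hs.le]
  have hd : HasDerivAt (fun s => (S.Zf s) ^ S.p)
      (((1 - S.γ) * S.φ (S.Xf t, S.Yf t)) * S.p * (S.Zf t) ^ (S.p - 1)) t :=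
    hZ.rpow_const (Or.inl hZpos.ne')
  have hd2 := hd.congr_of_eventuallyEq hev
  refine hd2.congr_deriv ?_
  symm
  rw [show S.Yf t ^ S.γ = (S.Zf t) ^ (S.p - 1) by rw [Yf]; exact S.g_rpow_γ hZpos.le]
  have h1 : (1 - S.γ) * S.p = 1 := by rw [mul_comm]; exact S.hp_mul
  calc S.φ (S.Xf t, S.Yf t) * S.Zf t ^ (S.p - 1)
      = ((1 - S.γ) * S.p) * (S.φ (S.Xf t, S.Yf t) * S.Zf t ^ (S.p - 1)) := by rw [h1, one_mul]
    _ = ((1 - S.γ) * S.φ (S.Xf t, S.Yf t)) * S.p * (S.Zf t) ^ (S.p - 1) := by ring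

lemma Yf_integral {t : ℝ} (ht : 0 ≤ t) :
    S.Yf t = ∫ s in (0:ℝ)..t, S.φ (S.Xf s, S.Yf s) * (S.Yf s) ^ S.γ := by
  have hFTC := intervalIntegral.integral_eq_sub_of_hasDeriv_right_of_le ht
    (S.Yf_continuousOn.mono Icc_subset_Ici_self)
    (fun x hx => (S.Yf_hasDerivAt hx.1).hasDerivWithinAt)
    ((by rw [uIcc_of_le ht]; exact S.integrand_Y_continuousOn.mono Icc_subset_Ici_self :
      ContinuousOn _ (uIcc 0 t)).intervalIntegrable)
  rw [hFTC, S.Yf_zero, sub_zero]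

lemma uniqueness {X' : ℝ → EuclideanSpace ℝ (Fin d)} {Y' : ℝ → ℝ}
    (hX'c : ContinuousOn X' (Ici 0)) (hY'c : ContinuousOn Y' (Ici 0))
    (hY'pos : ∀ t > (0:ℝ), 0 < Y' t) (hX'0 : X' 0 = S.x0) (hY'0 : Y' 0 = 0)
    (hX'int : ∀ t ≥ (0:ℝ), X' t = S.x0 + ∫ s in (0:ℝ)..t, S.ψ (X' s, Y' s))
    (hY'int : ∀ t ≥ (0:ℝ), Y' t = ∫ s in (0:ℝ)..t, S.φ (X' s, Y' s) * (Y' s) ^ S.γ)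
    {t : ℝ} (ht : 0 ≤ t) : X' t = S.Xf t ∧ Y' t = S.Yf t := by
  set n := ⌊t⌋₊ with hn
  set T : ℝ := (n:ℝ) + 1 with hT
  have htT : t < T := Nat.lt_floor_add_one t
  have hT0 : (0:ℝ) < T := lt_of_le_of_lt ht htT
  set Z' : ℝ → ℝ := fun s => (Y' s) ^ (1 - S.γ) with hZ'def
  set W : ℝ → EuclideanSpace ℝ (Fin d) × ℝ := fun s => (X' s, Z' s) with hWdef
  have hY'nonneg : ∀ s ∈ Ici (0:ℝ), 0 ≤ Y' s := by
    intro s hs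
    rcases eq_or_lt_of_le (mem_Ici.1 hs) with h | h
    · rw [← h, hY'0]
    · exact (hY'pos s h).le
  -- continuity of integrands
  have hrpow : Continuous fun y : ℝ => y ^ S.γ :=
    continuous_iff_continuousAt.2 fun y => Real.continuousAt_rpow_const y S.γ (Or.inr S.hγ0.le)
  have hkXc : ContinuousOn (fun s => S.ψ (X' s, Y' s)) (Ici 0) :=
    S.hψl.continuous.comp_continuousOn (hX'c.prodMk hY'c)
  have hkYc : ContinuousOn (fun s => S.φ (X' s, Y' s) * (Y' s) ^ S.γ) (Ici 0) :=
    (S.hφl.continuous.comp_continuousOn (hX'c.prodMk hY'c)).mul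
      (hrpow.comp_continuousOn hY'c)
  have hkZc : ContinuousOn (fun s => (1 - S.γ) * S.φ (X' s, Y' s)) (Ici 0) :=
    continuousOn_const.mul (S.hφl.continuous.comp_continuousOn (hX'c.prodMk hY'c))
  -- generic FTC-1 step
  have FTC1 : ∀ (k : ℝ → ℝ) (_ : ContinuousOn k (Ici 0)) (s : ℝ) (_ : 0 ≤ s),
      HasDerivWithinAt (fun u => ∫ τ in (0:ℝ)..u, k τ) (k s) (Ici s) s := by
    intro k hk s hs
    have hint : IntervalIntegrable k volume 0 s :=
      (by rw [uIcc_of_le hs]; exact hk.mono Icc_subset_Ici_self :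
        ContinuousOn k (uIcc 0 s)).intervalIntegrable
    have hmeas : StronglyMeasurableAtFilter k (𝓝[>] s) :=
      ⟨Ici 0, mem_of_superset self_mem_nhdsWithin
          (fun x hx => le_trans hs (le_of_lt hx)),
        hk.aestronglyMeasurable measurableSet_Ici⟩
    have hcw : ContinuousWithinAt k (Ioi s) s :=
      ((hk s hs).mono (fun x hx => le_trans hs (le_of_lt hx)))
    exact intervalIntegral.integral_hasDerivWithinAt_right hint hmeas hcw
  have FTC1E : ∀ (k : ℝ → EuclideanSpace ℝ (Fin d)) (_ : ContinuousOn k (Ici 0)) (s : ℝ)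
      (_ : 0 ≤ s),
      HasDerivWithinAt (fun u => ∫ τ in (0:ℝ)..u, k τ) (k s) (Ici s) s := by
    intro k hk s hs
    have hint : IntervalIntegrable k volume 0 s :=
      (by rw [uIcc_of_le hs]; exact hk.mono Icc_subset_Ici_self :
        ContinuousOn k (uIcc 0 s)).intervalIntegrable
    have hmeas : StronglyMeasurableAtFilter k (𝓝[>] s) :=
      ⟨Ici 0, mem_of_superset self_mem_nhdsWithin
          (fun x hx => le_trans hs (le_of_lt hx)),
        hk.aestronglyMeasurable measurableSet_Ici⟩
    have hcw : ContinuousWithinAt k (Ioi s) s :=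
      ((hk s hs).mono (fun x hx => le_trans hs (le_of_lt hx)))
    exact intervalIntegral.integral_hasDerivWithinAt_right hint hmeas hcw
  -- derivative of X'
  have hX'd : ∀ s, 0 ≤ s → HasDerivWithinAt X' (S.ψ (X' s, Y' s)) (Ici s) s := by
    intro s hs
    have hJ := (FTC1E _ hkXc s hs).const_add S.x0
    refine hJ.congr (fun y hy => hX'int y (le_trans hs hy)) (hX'int s hs)
  -- derivative of Y'
  have hY'd : ∀ s, 0 ≤ s → HasDerivWithinAt Y'
      (S.φ (X' s, Y' s) * (Y' s) ^ S.γ) (Ici s) s := by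
    intro s hs
    refine (FTC1 _ hkYc s hs).congr (fun y hy => hY'int y (le_trans hs hy)) (hY'int s hs)
  -- derivative of Z' at positive times
  have hZ'd : ∀ s, 0 < s → HasDerivWithinAt Z'
      ((1 - S.γ) * S.φ (X' s, Y' s)) (Ici s) s := by
    intro s hs
    have h := (hY'd s hs.le).rpow_const (p := 1 - S.γ) (Or.inl (hY'pos s hs).ne')
    have hone : Y' s ^ S.γ * Y' s ^ (1 - S.γ - 1) = 1 := by
      rw [← Real.rpow_add (hY'pos s hs)]
      norm_num
    have hval : S.φ (X' s, Y' s) * Y' s ^ S.γ * (1 - S.γ) * Y' s ^ (1 - S.γ - 1)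
        = (1 - S.γ) * S.φ (X' s, Y' s) := by
      calc S.φ (X' s, Y' s) * Y' s ^ S.γ * (1 - S.γ) * Y' s ^ (1 - S.γ - 1)
          = (1 - S.γ) * S.φ (X' s, Y' s) * (Y' s ^ S.γ * Y' s ^ (1 - S.γ - 1)) := by ring
        _ = (1 - S.γ) * S.φ (X' s, Y' s) := by rw [hone, mul_one]
    rw [← hval]
    exact h
  have hZ'cont : ContinuousOn Z' (Ici 0) :=
    hY'c.rpow_const (fun x hx => Or.inr S.hγ'.le)
  have hZ'zero : Z' 0 = 0 := by
    simp only [hZ'def, hY'0]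
    exact Real.zero_rpow (ne_of_gt S.hγ')
  -- integral representation of Z'
  have hZ'rep : ∀ u, 0 ≤ u → Z' u = ∫ τ in (0:ℝ)..u, (1 - S.γ) * S.φ (X' τ, Y' τ) := by
    intro u hu
    have hFTC := intervalIntegral.integral_eq_sub_of_hasDeriv_right_of_le hu
      (hZ'cont.mono Icc_subset_Ici_self)
      (fun x hx => (hZ'd x hx.1).mono Ioi_subset_Ici_self)
      ((by rw [uIcc_of_le hu]; exact hkZc.mono Icc_subset_Ici_self :
        ContinuousOn _ (uIcc 0 u)).intervalIntegrable)
    rw [hFTC, hZ'zero, sub_zero]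
  -- derivative of Z' at 0
  have hZ'd0 : HasDerivWithinAt Z' ((1 - S.γ) * S.φ (X' 0, Y' 0)) (Ici 0) 0 :=
    (FTC1 _ hkZc 0 le_rfl).congr (fun y hy => hZ'rep y hy) (hZ'rep 0 le_rfl)
  -- g inverts Z' back to Y'
  have hgZ' : ∀ s, 0 ≤ s → S.g (Z' s) = Y' s := fun s hs =>
    S.g_inverse (hY'nonneg s hs)
  -- W is a solution in the Gronwall sense
  have hWd : ∀ s ∈ Ico (0:ℝ) T, HasDerivWithinAt W (S.vf (W s)) (Ici s) s := by
    intro s hs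
    have hval : S.vf (W s) = (S.ψ (X' s, Y' s), (1 - S.γ) * S.φ (X' s, Y' s)) := by
      rw [vf]
      simp only [hWdef]
      rw [hgZ' s hs.1]
    rw [hval]
    rcases eq_or_lt_of_le hs.1 with h0 | h0
    · have := (hX'd 0 le_rfl).prodMk hZ'd0
      rw [← h0]
      exact this
    · exact (hX'd s hs.1).prodMk (hZ'd s h0)
  -- membership in the ball
  have hWmem : ∀ s ∈ Ico (0:ℝ) T, W s ∈ closedBall ((S.x0, (0:ℝ))) (S.C0 * T) := by
    intro s hs
    rw [mem_closedBall, Prod.dist_eq, max_le_iff]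
    simp only [hWdef]
    constructor
    · rw [dist_eq_norm, show X' s - S.x0 = ∫ τ in (0:ℝ)..s, S.ψ (X' τ, Y' τ) by
        rw [hX'int s hs.1]; abel]
      calc ‖∫ τ in (0:ℝ)..s, S.ψ (X' τ, Y' τ)‖ ≤ S.Mψ * |s - 0| :=
            intervalIntegral.norm_integral_le_of_norm_le_const fun x _ => S.hψb _
        _ ≤ S.C0 * T := by
            rw [sub_zero, abs_of_nonneg hs.1]
            exact mul_le_mul (le_max_left _ _) hs.2.le hs.1 S.C0_nonneg
    · rw [dist_eq_norm, sub_zero, show Z' s = ∫ τ in (0:ℝ)..s, (1 - S.γ) * S.φ (X' τ, Y' τ) from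
        hZ'rep s hs.1]
      calc ‖∫ τ in (0:ℝ)..s, (1 - S.γ) * S.φ (X' τ, Y' τ)‖ ≤ ((1 - S.γ) * S.Mφ) * |s - 0| := by
            refine intervalIntegral.norm_integral_le_of_norm_le_const fun x _ => ?_
            rw [Real.norm_eq_abs, abs_mul, abs_of_nonneg S.hγ'.le]
            exact mul_le_mul_of_nonneg_left (S.hφb _) S.hγ'.le
        _ ≤ S.C0 * T := by
            rw [sub_zero, abs_of_nonneg hs.1]
            exact mul_le_mul (le_max_right _ _) hs.2.le hs.1 S.C0_nonneg
  -- apply uniqueness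
  obtain ⟨K, hK⟩ := locLip_lipschitzOnWith_of_isCompact S.vf_locallyLipschitz
    (isCompact_closedBall ((S.x0, (0:ℝ))) (S.C0 * T))
  have hWcont : ContinuousOn W (Icc 0 T) :=
    ((hX'c.mono Icc_subset_Ici_self).prodMk (hZ'cont.mono Icc_subset_Ici_self))
  have hsol := S.sol_spec n
  have hEq : EqOn W (S.sol n) (Icc 0 T) := by
    refine ODE_solution_unique_of_mem_Icc_right (v := fun _ q => S.vf q)
      (s := fun _ => closedBall ((S.x0, (0:ℝ))) (S.C0 * T)) (fun _ _ => hK)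
      hWcont hWd hWmem hsol.2.1
      (fun s hs => hsol.hasDerivWithinAt_Ici hs)
      (fun s hs => hsol.mem_ball (Ico_subset_Icc_self hs)) ?_
    have : W 0 = (S.x0, 0) := by
      simp only [hWdef]
      rw [hX'0, hZ'zero]
    rw [this, hsol.1]
  have hWt : W t = S.sol n t := hEq ⟨ht, htT.le⟩
  have hglob : S.glob t = S.sol n t := S.glob_eq_sol n ⟨ht, htT.le⟩
  constructor
  · have := congrArg Prod.fst hWt
    simp only [hWdef] at this
    rw [Xf, hglob]
    exact this
  · have hZeq : Z' t = S.Zf t := by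
      have := congrArg Prod.snd hWt
      simp only [hWdef] at this
      rw [Zf, hglob]
      exact this
    rw [← hgZ' t ht, hZeq, Yf]

end Setup

/-- Existence and uniqueness of the extremal solution `(X⁺, Y⁺)` of the unperturbed
system `dX = ψ(X,Y) dt`, `dY = φ(X,Y) Y^γ dt`, starting from `(x⁰, 0)`, among solutions
with `Y(t) > 0` for all `t > 0`, in the repulsive case `φ(x,0) > 0`. -/
theorem stmt0 (d : ℕ) (hd : 1 ≤ d) (γ : ℝ) (hγ : γ ∈ Set.Ioo (0:ℝ) 1)
    (x0 : EuclideanSpace ℝ (Fin d))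
    (ψ : EuclideanSpace ℝ (Fin d) × ℝ → EuclideanSpace ℝ (Fin d))
    (φ : EuclideanSpace ℝ (Fin d) × ℝ → ℝ)
    (hψb : ∃ M, ∀ p, ‖ψ p‖ ≤ M) (hφb : ∃ M, ∀ p, |φ p| ≤ M)
    (hψl : LocallyLipschitz ψ) (hφl : LocallyLipschitz φ)
    (hφpos : ∀ x, 0 < φ (x, 0)) :
    ∃ X : ℝ → EuclideanSpace ℝ (Fin d), ∃ Y : ℝ → ℝ,
      (ContinuousOn X (Ici 0) ∧ ContinuousOn Y (Ici 0) ∧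
        (∀ t > (0:ℝ), 0 < Y t) ∧ X 0 = x0 ∧ Y 0 = 0 ∧
        (∀ t ≥ (0:ℝ), X t = x0 + ∫ s in (0:ℝ)..t, ψ (X s, Y s)) ∧
        (∀ t ≥ (0:ℝ), Y t = ∫ s in (0:ℝ)..t, φ (X s, Y s) * (Y s) ^ γ)) ∧
      (∀ X' : ℝ → EuclideanSpace ℝ (Fin d), ∀ Y' : ℝ → ℝ,
        (ContinuousOn X' (Ici 0) ∧ ContinuousOn Y' (Ici 0) ∧
          (∀ t > (0:ℝ), 0 < Y' t) ∧ X' 0 = x0 ∧ Y' 0 = 0 ∧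
          (∀ t ≥ (0:ℝ), X' t = x0 + ∫ s in (0:ℝ)..t, ψ (X' s, Y' s)) ∧
          (∀ t ≥ (0:ℝ), Y' t = ∫ s in (0:ℝ)..t, φ (X' s, Y' s) * (Y' s) ^ γ)) →
        ∀ t ≥ (0:ℝ), X' t = X t ∧ Y' t = Y t) := by
  obtain ⟨Mψ, hψb'⟩ := hψb
  obtain ⟨Mφ, hφb'⟩ := hφb
  set S : Setup d := ⟨γ, hγ.1, hγ.2, x0, ψ, φ, Mψ, Mφ, hψb', hφb', hψl, hφl, hφpos⟩ with hS
  refine ⟨S.Xf, S.Yf, ⟨S.Xf_continuousOn, S.Yf_continuousOn, fun t ht => S.Yf_pos ht,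
    S.Xf_zero, S.Yf_zero, fun t ht => S.Xf_integral ht, fun t ht => S.Yf_integral ht⟩, ?_⟩
  rintro X' Y' ⟨h1, h2, h3, h4, h5, h6, h7⟩ t ht
  exact S.uniqueness h1 h2 h3 h4 h5 h6 h7 ht
end

section
/- Let γ ∈ (0,1), let X : [0,∞) → ℝ^d be continuous, let φ : ℝ^d × ℝ → ℝ be continuous, and let Ỹ : [0,∞) → ℝ be a continuous function with Ỹ(0) = 0, Ỹ(t) > 0 for all t > 0, satisfying Ỹ(t) = (1-γ) ∫₀ᵗ φ(X(s), Ỹ(s)^{1/(1-γ)}) ds for all t ≥ 0. Then the function Y(t) := Ỹ(t)^{1/(1-γ)} satisfies Y(t) = ∫₀ᵗ φ(X(s),Y(s)) Y(s)^γ ds for all t ≥ 0. -/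
open MeasureTheory Set

/-- Substitution lemma: if `Ỹ` solves the regularized integral equation
`Ỹ(t) = (1-γ) ∫₀ᵗ φ(X(s), Ỹ(s)^{1/(1-γ)}) ds`, with `Ỹ(0) = 0` and `Ỹ(t) > 0` for `t > 0`,
then `Y := Ỹ^{1/(1-γ)}` solves the degenerate equation
`Y(t) = ∫₀ᵗ φ(X(s), Y(s)) Y(s)^γ ds`. -/
theorem stmt1 (d : ℕ) (γ : ℝ) (hγ : γ ∈ Set.Ioo (0:ℝ) 1)
    (X : ℝ → EuclideanSpace ℝ (Fin d)) (hX : ContinuousOn X (Ici 0))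
    (φ : EuclideanSpace ℝ (Fin d) × ℝ → ℝ) (hφ : Continuous φ)
    (Yt : ℝ → ℝ) (hYt : ContinuousOn Yt (Ici 0)) (hYt0 : Yt 0 = 0)
    (hYtpos : ∀ t > (0:ℝ), 0 < Yt t)
    (heq : ∀ t ≥ (0:ℝ),
      Yt t = (1 - γ) * ∫ s in (0:ℝ)..t, φ (X s, (Yt s) ^ (1/(1-γ)))) :
    ∀ t ≥ (0:ℝ), (Yt t) ^ (1/(1-γ)) =
      ∫ s in (0:ℝ)..t, φ (X s, (Yt s) ^ (1/(1-γ))) * ((Yt s) ^ (1/(1-γ))) ^ γ := by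
  intro t ht
  have h1γ : (0:ℝ) < 1 - γ := by linarith [hγ.2]
  set p : ℝ := 1/(1-γ) with hp_def
  have hp_pos : 0 < p := by positivity
  set f : ℝ → ℝ := fun s => φ (X s, (Yt s) ^ p) with hf_def
  set Y : ℝ → ℝ := fun s => (Yt s) ^ p with hY_def
  -- continuity facts
  have hYcont : ContinuousOn Y (Ici 0) :=
    hYt.rpow_const fun x _ => Or.inr hp_pos.le
  have hfcont : ContinuousOn f (Ici 0) :=
    hφ.comp_continuousOn (hX.prodMk hYcont)
  have hgcont : ContinuousOn (fun s => f s * (Y s) ^ γ) (Ici 0) :=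
    hfcont.mul (hYcont.rpow_const fun x _ => Or.inr hγ.1.le)
  -- the key derivative fact on the interior
  have hderiv : ∀ s ∈ Set.Ioo (0:ℝ) t, HasDerivAt Y (f s * (Y s) ^ γ) s := by
    intro s hs
    have hs0 : (0:ℝ) < s := hs.1
    have hIci : Ici (0:ℝ) ∈ nhds s := Ici_mem_nhds hs0
    -- derivative of the integral
    have hint : ∀ u : ℝ, 0 ≤ u → IntervalIntegrable f volume 0 u := by
      intro u hu
      apply (hfcont.mono ?_).intervalIntegrable
      rw [uIcc_of_le hu]
      exact Icc_subset_Ici_self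
    have hmeas : StronglyMeasurableAtFilter f (nhds s) volume :=
      ⟨Ici 0, hIci, hfcont.aestronglyMeasurable measurableSet_Ici⟩
    have hcontat : ContinuousAt f s := hfcont.continuousAt hIci
    have hG : HasDerivAt (fun u => (1 - γ) * ∫ x in (0:ℝ)..u, f x) ((1-γ) * f s) s :=
      (intervalIntegral.integral_hasDerivAt_right (hint s hs0.le) hmeas hcontat).const_mul _
    have hYt' : HasDerivAt Yt ((1-γ) * f s) s := by
      apply hG.congr_of_eventuallyEq
      filter_upwards [hIci] with u hu
      exact heq u hu
    have hne : Yt s ≠ 0 := (hYtpos s hs0).ne'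
    have hYder : HasDerivAt Y ((1-γ) * f s * p * (Yt s) ^ (p - 1)) s :=
      hYt'.rpow_const (Or.inl hne)
    convert hYder using 1
    have hYsnn : 0 ≤ Yt s := (hYtpos s hs0).le
    have hpow : (Y s) ^ γ = (Yt s) ^ (p - 1) := by
      show ((Yt s) ^ p) ^ γ = (Yt s) ^ (p - 1)
      rw [← Real.rpow_mul hYsnn]
      congr 1
      rw [hp_def]
      field_simp
      ring
    rw [hpow]
    rw [hp_def]
    field_simp
  -- FTC
  have hgint : IntervalIntegrable (fun s => f s * (Y s) ^ γ) volume 0 t := by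
    apply (hgcont.mono ?_).intervalIntegrable
    rw [uIcc_of_le ht]
    exact Icc_subset_Ici_self
  have key := intervalIntegral.integral_eq_sub_of_hasDeriv_right_of_le ht
    (hYcont.mono Icc_subset_Ici_self)
    (fun x hx => (hderiv x hx).hasDerivWithinAt) hgint
  have hY0 : Y 0 = 0 := by
    show (Yt 0) ^ p = 0
    rw [hYt0, Real.zero_rpow hp_pos.ne']
  rw [show (Yt t) ^ (1/(1-γ)) = Y t from rfl]
  rw [key, hY0, sub_zero]
end

section
/- Let T > 0, γ ∈ (0,1), c₁ > 0, and let ψ : ℝ^d × ℝ → ℝ^d and φ : ℝ^d × ℝ → ℝ be bounded Lipschitz continuous functions with φ ≥ c₁ everywhere. For x ∈ ℝ^d and y > 0, let (X^{x,y}, Y^{x,y}) denote the unique continuous solution on [0,T] of X(t) = x + ∫₀ᵗ ψ(X(s),Y(s)) ds, Y(t) = y + ∫₀ᵗ φ(X(s),Y(s)) Y(s)^γ ds (this solution satisfies Y^{x,y}(t) > 0 on [0,T]). Then: for every δ > 0 and every R ≥ 1 there exists α > 0 such that for every x with |x| ≤ R, every y ∈ [1/R, R], every continuous f = (f_X, f_Y)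 : [0,T] → ℝ^d × ℝ with f(0) = 0 and sup_{t∈[0,T]} |f(t)| < α, and every pair of continuous functions (X_f, Y_f) on [0,T] satisfying X_f(t) = x + ∫₀ᵗ ψ(X_f(s),Y_f(s)) ds + f_X(t) and Y_f(t) = y + ∫₀ᵗ φ(X_f(s),Y_f(s)) Y_f(s)^γ ds + f_Y(t), one has |X_f(t) − X^{x,y}(t)| + |Y_f(t) − Y^{x,y}(t)| ≤ δ for all t ∈ [0,T]. -/
open MeasureTheory Set intervalIntegral Real Filter Topology

/-- Integral form of Gronwall's inequality for globally continuous nonnegative `u`. -/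
lemma gronwall_int {b L a : ℝ} (hL : 0 < L) {u : ℝ → ℝ}
    (hu : Continuous u) (hu0 : ∀ t, 0 ≤ u t)
    (h : ∀ t ∈ Icc 0 b, u t ≤ a + L * ∫ s in (0:ℝ)..t, u s) :
    ∀ t ∈ Icc 0 b, u t ≤ a * Real.exp (L * t) := by
  set v : ℝ → ℝ := fun t => ∫ s in (0:ℝ)..t, u s with hv
  have hvd : ∀ t : ℝ, HasDerivAt v (u t) t := fun t =>
    integral_hasDerivAt_right (hu.intervalIntegrable _ _)
      (hu.stronglyMeasurableAtFilter _ _) hu.continuousAt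
  have hvnn : ∀ t ∈ Icc (0:ℝ) b, 0 ≤ v t := fun t ht =>
    intervalIntegral.integral_nonneg ht.1 (fun s _ => hu0 s)
  have key : ∀ t ∈ Icc (0:ℝ) b, ‖v t‖ ≤ gronwallBound 0 L a (t - 0) := by
    apply norm_le_gronwallBound_of_norm_deriv_right_le
    · exact fun t _ => (hvd t).continuousAt.continuousWithinAt
    · exact fun t _ => (hvd t).hasDerivWithinAt
    · simp [hv]
    · intro t ht
      have h1 : u t ≤ a + L * v t := h t ⟨ht.1, ht.2.le⟩
      have h2 : 0 ≤ v t := hvnn t ⟨ht.1, ht.2.le⟩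
      rw [Real.norm_eq_abs, Real.norm_eq_abs, abs_of_nonneg (hu0 t), abs_of_nonneg h2]
      linarith
  intro t ht
  have h3 := key t ht
  rw [gronwallBound_of_K_ne_0 hL.ne'] at h3
  simp only [Real.norm_eq_abs, abs_of_nonneg (hvnn t ht), sub_zero, zero_mul, zero_add] at h3
  have h1 : u t ≤ a + L * v t := h t ht
  have : L * v t ≤ a * (Real.exp (L * t) - 1) := by
    have := mul_le_mul_of_nonneg_left h3 hL.le
    calc L * v t ≤ L * (a / L * (Real.exp (L * t) - 1)) := this
      _ = a * (Real.exp (L * t) - 1) := by field_simp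
  linarith

/-- `x ↦ x ^ γ` is Lipschitz on `[m, ∞)` with constant `γ * m^(γ-1)`. -/
lemma rpow_lip {γ m : ℝ} (hγ : γ ∈ Set.Ioo (0:ℝ) 1) (hm : 0 < m) {p q : ℝ}
    (hp : m ≤ p) (hq : m ≤ q) :
    |p ^ γ - q ^ γ| ≤ γ * m ^ (γ - 1) * |p - q| := by
  have := Convex.norm_image_sub_le_of_norm_hasDerivWithin_le
    (f := fun x : ℝ => x ^ γ) (f' := fun x : ℝ => γ * x ^ (γ - 1))
    (s := Ici m) (C := γ * m ^ (γ - 1))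
    (fun x hx => (Real.hasDerivAt_rpow_const
      (Or.inl (ne_of_gt (lt_of_lt_of_le hm hx)))).hasDerivWithinAt)
    (fun x hx => by
      have hx0 : (0:ℝ) < x := lt_of_lt_of_le hm hx
      rw [Real.norm_eq_abs,
        abs_of_nonneg (mul_nonneg hγ.1.le (Real.rpow_nonneg hx0.le _))]
      have : x ^ (γ - 1) ≤ m ^ (γ - 1) :=
        Real.rpow_le_rpow_of_nonpos hm hx (by linarith [hγ.2])
      exact mul_le_mul_of_nonneg_left this hγ.1.le)
    (convex_Ici m) hq hp
  simpa [Real.norm_eq_abs] using this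

/-- `z^γ ≤ 1 + z` for `z ≥ 0`, `γ ∈ (0,1)`. -/
lemma rpow_le_one_add {γ : ℝ} (hγ : γ ∈ Set.Ioo (0:ℝ) 1) {z : ℝ} (hz : 0 ≤ z) :
    z ^ γ ≤ 1 + z := by
  rcases le_total z 1 with h | h
  · have := Real.rpow_le_one hz h hγ.1.le
    linarith
  · have h2 : z ^ γ ≤ z ^ (1:ℝ) := Real.rpow_le_rpow_of_exponent_le h hγ.2.le
    rw [Real.rpow_one] at h2
    linarith

set_option maxHeartbeats 1000000 in
/-- Deterministic stability lemma: any solution of the integral system perturbed by a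
uniformly small continuous forcing `f` with `f(0) = 0`, started at `(x, y)` with
`|x| ≤ R` and `y ∈ [1/R, R]`, stays uniformly `δ`-close on `[0,T]` to the (unique)
unperturbed solution started at the same point. -/
theorem stmt2 (d : ℕ) (T : ℝ) (hT : 0 < T) (γ : ℝ) (hγ : γ ∈ Set.Ioo (0:ℝ) 1)
    (c₁ : ℝ) (hc₁ : 0 < c₁)
    (ψ : EuclideanSpace ℝ (Fin d) × ℝ → EuclideanSpace ℝ (Fin d))
    (φ : EuclideanSpace ℝ (Fin d) × ℝ → ℝ)
    (hψb : ∃ M, ∀ p, ‖ψ p‖ ≤ M) (hφb : ∃ M, ∀ p, |φ p| ≤ M)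
    (hψl : ∃ K, LipschitzWith K ψ) (hφl : ∃ K, LipschitzWith K φ)
    (hφc : ∀ p, c₁ ≤ φ p) :
    ∀ δ > (0:ℝ), ∀ R ≥ (1:ℝ), ∃ α > (0:ℝ),
      ∀ x : EuclideanSpace ℝ (Fin d), ‖x‖ ≤ R →
      ∀ y : ℝ, y ∈ Icc (1/R) R →
      -- the unperturbed solution started at (x, y)
      ∀ X₀ : ℝ → EuclideanSpace ℝ (Fin d), ∀ Y₀ : ℝ → ℝ,
        ContinuousOn X₀ (Icc 0 T) → ContinuousOn Y₀ (Icc 0 T) →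
        (∀ t ∈ Icc (0:ℝ) T, 0 < Y₀ t) →
        (∀ t ∈ Icc (0:ℝ) T, X₀ t = x + ∫ s in (0:ℝ)..t, ψ (X₀ s, Y₀ s)) →
        (∀ t ∈ Icc (0:ℝ) T, Y₀ t = y + ∫ s in (0:ℝ)..t, φ (X₀ s, Y₀ s) * (Y₀ s) ^ γ) →
      -- the small continuous forcing f = (f_X, f_Y)
      ∀ f : ℝ → EuclideanSpace ℝ (Fin d) × ℝ,
        ContinuousOn f (Icc 0 T) → f 0 = 0 →
        (∀ t ∈ Icc (0:ℝ) T, ‖f t‖ < α) →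
      -- any solution of the perturbed equation
      ∀ Xf : ℝ → EuclideanSpace ℝ (Fin d), ∀ Yf : ℝ → ℝ,
        ContinuousOn Xf (Icc 0 T) → ContinuousOn Yf (Icc 0 T) →
        (∀ t ∈ Icc (0:ℝ) T,
          Xf t = x + (∫ s in (0:ℝ)..t, ψ (Xf s, Yf s)) + (f t).1) →
        (∀ t ∈ Icc (0:ℝ) T,
          Yf t = y + (∫ s in (0:ℝ)..t, φ (Xf s, Yf s) * (Yf s) ^ γ) + (f t).2) →
      ∀ t ∈ Icc (0:ℝ) T, ‖Xf t - X₀ t‖ + |Yf t - Y₀ t| ≤ δ := by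
  obtain ⟨Mφ0, hMφ0⟩ := hφb
  obtain ⟨Kψ, hKψ⟩ := hψl
  obtain ⟨Kφ, hKφ⟩ := hφl
  intro δ hδ R hR
  have hR0 : (0:ℝ) < R := lt_of_lt_of_le one_pos hR
  set M : ℝ := max Mφ0 1 with hMdef
  have hM1 : (1:ℝ) ≤ M := le_max_right _ _
  have hM0 : (0:ℝ) < M := lt_of_lt_of_le one_pos hM1
  have hMb : ∀ p, |φ p| ≤ M := fun p => (hMφ0 p).trans (le_max_left _ _)
  set B : ℝ := (R + M * T) * Real.exp (M * T) with hBdef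
  have hB0 : (0:ℝ) ≤ B := by positivity
  set m : ℝ := 1 / (2 * R) with hmdef
  have hm0 : (0:ℝ) < m := by positivity
  have h2m : 1 / R = 2 * m := by rw [hmdef, mul_one_div, ← div_div, div_self two_ne_zero]
  set δ' : ℝ := min δ m with hδ'def
  have hδ'0 : (0:ℝ) < δ' := lt_min hδ hm0
  have hδ'm : δ' ≤ m := min_le_right _ _
  have hδ'δ : δ' ≤ δ := min_le_left _ _
  set Lφ : ℝ := M * (γ * m ^ (γ - 1)) + (Kφ:ℝ) * (1 + B) with hLφdef
  have hLφ0 : (0:ℝ) ≤ Lφ := by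
    have h1 : (0:ℝ) ≤ γ * m ^ (γ - 1) := mul_nonneg hγ.1.le (Real.rpow_nonneg hm0.le _)
    have h2 : (0:ℝ) ≤ (Kφ:ℝ) := Kφ.coe_nonneg
    nlinarith
  set L : ℝ := (Kψ:ℝ) + Lφ + 1 with hLdef
  have hL0 : (0:ℝ) < L := by
    have := Kψ.coe_nonneg
    simp only [hLdef]; linarith
  have hexp : (0:ℝ) < Real.exp (L * T) := Real.exp_pos _
  set α : ℝ := δ' / (4 * Real.exp (L * T)) with hαdef
  have hα0 : (0:ℝ) < α := by positivity
  have hkey : 2 * α * Real.exp (L * T) = δ' / 2 := by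
    rw [hαdef]; field_simp; ring
  refine ⟨α, hα0, ?_⟩
  intro x hx y hy X₀ Y₀ hX₀c hY₀c hY₀pos hX₀eq hY₀eq f hfc hf0 hfα Xf Yf hXfc hYfc hXfeq hYfeq
  have hrpc : Continuous fun z : ℝ => z ^ γ :=
    continuous_iff_continuousAt.2 fun z => Real.continuousAt_rpow_const z γ (Or.inr hγ.1.le)
  -- continuity of the integrands
  have hψ₀c : ContinuousOn (fun s => ψ (X₀ s, Y₀ s)) (Icc 0 T) :=
    hKψ.continuous.comp_continuousOn (hX₀c.prodMk hY₀c)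
  have hψfc : ContinuousOn (fun s => ψ (Xf s, Yf s)) (Icc 0 T) :=
    hKψ.continuous.comp_continuousOn (hXfc.prodMk hYfc)
  have hF₀c : ContinuousOn (fun s => φ (X₀ s, Y₀ s) * (Y₀ s) ^ γ) (Icc 0 T) :=
    (hKφ.continuous.comp_continuousOn (hX₀c.prodMk hY₀c)).mul (hrpc.comp_continuousOn hY₀c)
  have hFfc : ContinuousOn (fun s => φ (Xf s, Yf s) * (Yf s) ^ γ) (Icc 0 T) :=
    (hKφ.continuous.comp_continuousOn (hXfc.prodMk hYfc)).mul (hrpc.comp_continuousOn hYfc)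
  -- integrability helpers
  have hInt : ∀ {t : ℝ}, t ∈ Icc (0:ℝ) T → ∀ {u : ℝ → ℝ}, ContinuousOn u (Icc 0 T) →
      IntervalIntegrable u volume 0 t := by
    intro t ht u hu
    apply ContinuousOn.intervalIntegrable
    rw [uIcc_of_le ht.1]
    exact hu.mono (Icc_subset_Icc le_rfl ht.2)
  have hIntE : ∀ {t : ℝ}, t ∈ Icc (0:ℝ) T →
      ∀ {u : ℝ → EuclideanSpace ℝ (Fin d)}, ContinuousOn u (Icc 0 T) →
      IntervalIntegrable u volume 0 t := by
    intro t ht u hu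
    apply ContinuousOn.intervalIntegrable
    rw [uIcc_of_le ht.1]
    exact hu.mono (Icc_subset_Icc le_rfl ht.2)
  -- lower bound for Y₀
  have hY₀lb : ∀ t ∈ Icc (0:ℝ) T, 1 / R ≤ Y₀ t := by
    intro t ht
    rw [hY₀eq t ht]
    have : (0:ℝ) ≤ ∫ s in (0:ℝ)..t, φ (X₀ s, Y₀ s) * (Y₀ s) ^ γ := by
      apply intervalIntegral.integral_nonneg ht.1
      intro s hs
      exact mul_nonneg (le_trans hc₁.le (hφc _))
        (Real.rpow_nonneg (hY₀pos s ⟨hs.1, hs.2.trans ht.2⟩).le _)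
    linarith [hy.1]
  -- upper bound for Y₀
  have hY₀ub : ∀ t ∈ Icc (0:ℝ) T, Y₀ t ≤ B := by
    set c : ℝ → ℝ := fun s => max 0 (min s T) with hcdef
    have hcc : Continuous c := continuous_const.max (continuous_id.min continuous_const)
    have hcmem : ∀ s, c s ∈ Icc (0:ℝ) T :=
      fun s => ⟨le_max_left _ _, max_le hT.le (min_le_right _ _)⟩
    have hceq : ∀ s ∈ Icc (0:ℝ) T, c s = s := fun s hs => by
      simp only [hcdef]; rw [min_eq_left hs.2, max_eq_right hs.1]
    have hub : Continuous fun s => Y₀ (c s) := hY₀c.comp_continuous hcc hcmem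
    have hub0 : ∀ s, 0 ≤ Y₀ (c s) := fun s => (hY₀pos _ (hcmem s)).le
    have hgr := gronwall_int (b := T) (a := R + M * T) hM0 hub hub0 ?_
    · intro t ht
      have := hgr t ht
      rw [hceq t ht] at this
      calc Y₀ t ≤ (R + M * T) * Real.exp (M * t) := this
        _ ≤ B := by
            rw [hBdef]
            apply mul_le_mul_of_nonneg_left
              (Real.exp_le_exp.2 (mul_le_mul_of_nonneg_left ht.2 hM0.le))
            nlinarith
    · intro t ht
      rw [hceq t ht]
      have hieq : (∫ s in (0:ℝ)..t, Y₀ (c s)) = ∫ s in (0:ℝ)..t, Y₀ s := by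
        apply intervalIntegral.integral_congr
        intro s hs
        rw [uIcc_of_le ht.1] at hs
        exact congrArg Y₀ (hceq s ⟨hs.1, hs.2.trans ht.2⟩)
      rw [hieq, hY₀eq t ht]
      have hmono : (∫ s in (0:ℝ)..t, φ (X₀ s, Y₀ s) * (Y₀ s) ^ γ)
          ≤ ∫ s in (0:ℝ)..t, (M + M * Y₀ s) := by
        apply intervalIntegral.integral_mono_on ht.1 (hInt ht hF₀c)
          (hInt ht (u := fun s => M + M * Y₀ s) (continuousOn_const.add (continuousOn_const.mul hY₀c)))
        intro s hs
        have hsT : s ∈ Icc (0:ℝ) T := ⟨hs.1, hs.2.trans ht.2⟩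
        have h1 : φ (X₀ s, Y₀ s) * (Y₀ s) ^ γ ≤ M * (Y₀ s) ^ γ :=
          mul_le_mul_of_nonneg_right ((le_abs_self _).trans (hMb _))
            (Real.rpow_nonneg (hY₀pos s hsT).le _)
        have h2 : (Y₀ s) ^ γ ≤ 1 + Y₀ s := rpow_le_one_add hγ (hY₀pos s hsT).le
        nlinarith
      have hsplit : (∫ s in (0:ℝ)..t, (M + M * Y₀ s))
          = M * t + M * ∫ s in (0:ℝ)..t, Y₀ s := by
        rw [intervalIntegral.integral_add intervalIntegrable_const
          (hInt ht (u := fun s => M * Y₀ s) (continuousOn_const.mul hY₀c)),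
          intervalIntegral.integral_const, intervalIntegral.integral_const_mul,
          smul_eq_mul, sub_zero, mul_comm t M]
      have hy2 := hy.2
      have hMt : M * t ≤ M * T := mul_le_mul_of_nonneg_left ht.2 hM0.le
      linarith [hmono, hsplit.le, hsplit.ge]
  -- the difference function
  set g : ℝ → ℝ := fun s => ‖Xf s - X₀ s‖ + |Yf s - Y₀ s| with hgdef
  have hgc : ContinuousOn g (Icc 0 T) := ((hXfc.sub hX₀c).norm).add ((hYfc.sub hY₀c).abs)
  have hgnn : ∀ s, 0 ≤ g s := fun s => add_nonneg (norm_nonneg _) (abs_nonneg _)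
  have h0T : (0:ℝ) ∈ Icc (0:ℝ) T := ⟨le_rfl, hT.le⟩
  have hg0 : g 0 = 0 := by
    have e1 : Xf 0 = x := by
      have := hXfeq 0 h0T
      simpa [hf0] using this
    have e2 : X₀ 0 = x := by simpa using hX₀eq 0 h0T
    have e3 : Yf 0 = y := by
      have := hYfeq 0 h0T
      simpa [hf0] using this
    have e4 : Y₀ 0 = y := by simpa using hY₀eq 0 h0T
    simp [hgdef, e1, e2, e3, e4]
  -- distance between the pairs is bounded by g
  have hdist : ∀ s, dist (Xf s, Yf s) ((X₀ s, Y₀ s) : EuclideanSpace ℝ (Fin d) × ℝ) ≤ g s := by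
    intro s
    rw [Prod.dist_eq]
    apply max_le
    · rw [dist_eq_norm]; exact le_add_of_nonneg_right (abs_nonneg _)
    · rw [Real.dist_eq]; exact le_add_of_nonneg_left (norm_nonneg _)
  -- the bootstrap set
  set A : Set ℝ := {t | t ∈ Icc (0:ℝ) T ∧ ∀ s ∈ Icc (0:ℝ) t, g s ≤ δ'} with hAdef
  have hA0 : (0:ℝ) ∈ A := by
    refine ⟨h0T, fun s hs => ?_⟩
    have : s = 0 := le_antisymm hs.2 hs.1
    rw [this, hg0]; exact hδ'0.le
  have hAne : A.Nonempty := ⟨0, hA0⟩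
  have hAbdd : BddAbove A := ⟨T, fun t ht => ht.1.2⟩
  set τ : ℝ := sSup A with hτdef
  have hτ0 : 0 ≤ τ := le_csSup hAbdd hA0
  have hτT : τ ≤ T := csSup_le hAne (fun t ht => ht.1.2)
  have hτmem : τ ∈ Icc (0:ℝ) T := ⟨hτ0, hτT⟩
  have HτIco : ∀ s ∈ Ico (0:ℝ) τ, g s ≤ δ' := by
    intro s hs
    obtain ⟨t, htA, hst⟩ := exists_lt_of_lt_csSup hAne hs.2
    exact htA.2 s ⟨hs.1, hst.le⟩
  have Hτ : ∀ s ∈ Icc (0:ℝ) τ, g s ≤ δ' := by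
    intro s hs
    rcases lt_or_eq_of_le hs.2 with h | h
    · exact HτIco s ⟨hs.1, h⟩
    · subst h
      rcases eq_or_lt_of_le hτ0 with h0 | h0
      · rw [← h0, hg0]; exact hδ'0.le
      · have hne : (𝓝[Ico (0:ℝ) τ] τ).NeBot := by
          apply mem_closure_iff_nhdsWithin_neBot.1
          rw [closure_Ico h0.ne]
          exact ⟨hτ0, le_rfl⟩
        have hcw : Filter.Tendsto g (𝓝[Ico (0:ℝ) τ] τ) (𝓝 (g τ)) :=
          (hgc τ hτmem).mono_left (nhdsWithin_mono τ
            (fun u hu => ⟨hu.1, hu.2.le.trans hτT⟩))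
        apply le_of_tendsto hcw
        filter_upwards [self_mem_nhdsWithin] with u hu
        exact HτIco u hu
  -- the main Gronwall estimate on [0, τ]
  have hmain : ∀ t ∈ Icc (0:ℝ) τ, g t ≤ 2 * α + L * ∫ s in (0:ℝ)..t, g s := by
    intro t ht
    have htT : t ∈ Icc (0:ℝ) T := ⟨ht.1, ht.2.trans hτT⟩
    have hXd : Xf t - X₀ t
        = (∫ s in (0:ℝ)..t, (ψ (Xf s, Yf s) - ψ (X₀ s, Y₀ s))) + (f t).1 := by
      rw [intervalIntegral.integral_sub (hIntE htT hψfc) (hIntE htT hψ₀c),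
        hXfeq t htT, hX₀eq t htT]
      abel
    have hψpt : ∀ s ∈ Icc (0:ℝ) t, ‖ψ (Xf s, Yf s) - ψ (X₀ s, Y₀ s)‖ ≤ (Kψ:ℝ) * g s := by
      intro s hs
      have hd := hKψ.dist_le_mul (Xf s, Yf s) (X₀ s, Y₀ s)
      rw [dist_eq_norm] at hd
      exact hd.trans (mul_le_mul_of_nonneg_left (hdist s) Kψ.coe_nonneg)
    have hXb : ‖Xf t - X₀ t‖ ≤ (Kψ:ℝ) * (∫ s in (0:ℝ)..t, g s) + α := by
      rw [hXd]
      calc ‖(∫ s in (0:ℝ)..t, (ψ (Xf s, Yf s) - ψ (X₀ s, Y₀ s))) + (f t).1‖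
          ≤ ‖∫ s in (0:ℝ)..t, (ψ (Xf s, Yf s) - ψ (X₀ s, Y₀ s))‖ + ‖(f t).1‖ :=
            norm_add_le _ _
        _ ≤ (∫ s in (0:ℝ)..t, ‖ψ (Xf s, Yf s) - ψ (X₀ s, Y₀ s)‖) + α := by
            apply add_le_add
            · exact intervalIntegral.norm_integral_le_integral_norm ht.1
            · exact (norm_fst_le (f t)).trans (hfα t htT).le
        _ ≤ (∫ s in (0:ℝ)..t, (Kψ:ℝ) * g s) + α := by
            apply add_le_add_left
            exact intervalIntegral.integral_mono_on ht.1
              (hInt htT ((hψfc.sub hψ₀c).norm)) (hInt htT (continuousOn_const.mul hgc)) hψpt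
        _ = (Kψ:ℝ) * (∫ s in (0:ℝ)..t, g s) + α := by
            rw [intervalIntegral.integral_const_mul]
    have hYd : Yf t - Y₀ t
        = (∫ s in (0:ℝ)..t,
            (φ (Xf s, Yf s) * (Yf s) ^ γ - φ (X₀ s, Y₀ s) * (Y₀ s) ^ γ)) + (f t).2 := by
      rw [intervalIntegral.integral_sub (hInt htT hFfc) (hInt htT hF₀c),
        hYfeq t htT, hY₀eq t htT]
      ring
    have hFpt : ∀ s ∈ Icc (0:ℝ) t,
        |φ (Xf s, Yf s) * (Yf s) ^ γ - φ (X₀ s, Y₀ s) * (Y₀ s) ^ γ| ≤ Lφ * g s := by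
      intro s hs
      have hsτ : s ∈ Icc (0:ℝ) τ := ⟨hs.1, hs.2.trans ht.2⟩
      have hsT : s ∈ Icc (0:ℝ) T := ⟨hs.1, hsτ.2.trans hτT⟩
      have hgs : g s ≤ δ' := Hτ s hsτ
      have hΔ : |Yf s - Y₀ s| ≤ g s := le_add_of_nonneg_left (norm_nonneg _)
      have hY₀m : m ≤ Y₀ s := by
        have := hY₀lb s hsT; rw [h2m] at this; linarith [hm0]
      have hYfm : m ≤ Yf s := by
        have h1 := hY₀lb s hsT
        rw [h2m] at h1
        have h2 := (abs_le.1 (hΔ.trans hgs)).1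
        linarith [hδ'm]
      have e1 : |(Yf s) ^ γ - (Y₀ s) ^ γ| ≤ γ * m ^ (γ - 1) * |Yf s - Y₀ s| :=
        rpow_lip hγ hm0 hYfm hY₀m
      have e2 : |φ (Xf s, Yf s) - φ (X₀ s, Y₀ s)| ≤ (Kφ:ℝ) * g s := by
        have hd := hKφ.dist_le_mul (Xf s, Yf s) (X₀ s, Y₀ s)
        rw [Real.dist_eq] at hd
        exact hd.trans (mul_le_mul_of_nonneg_left (hdist s) Kφ.coe_nonneg)
      have e3 : (Y₀ s) ^ γ ≤ 1 + B :=
        (rpow_le_one_add hγ (hY₀pos s hsT).le).trans (by linarith [hY₀ub s hsT])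
      have e3' : (0:ℝ) ≤ (Y₀ s) ^ γ := Real.rpow_nonneg (hY₀pos s hsT).le _
      have hcoef : (0:ℝ) ≤ γ * m ^ (γ - 1) :=
        mul_nonneg hγ.1.le (Real.rpow_nonneg hm0.le _)
      have hsplit : φ (Xf s, Yf s) * (Yf s) ^ γ - φ (X₀ s, Y₀ s) * (Y₀ s) ^ γ
          = φ (Xf s, Yf s) * ((Yf s) ^ γ - (Y₀ s) ^ γ)
            + (φ (Xf s, Yf s) - φ (X₀ s, Y₀ s)) * (Y₀ s) ^ γ := by ring
      rw [hsplit]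
      calc |φ (Xf s, Yf s) * ((Yf s) ^ γ - (Y₀ s) ^ γ)
            + (φ (Xf s, Yf s) - φ (X₀ s, Y₀ s)) * (Y₀ s) ^ γ|
          ≤ |φ (Xf s, Yf s)| * |(Yf s) ^ γ - (Y₀ s) ^ γ|
            + |φ (Xf s, Yf s) - φ (X₀ s, Y₀ s)| * (Y₀ s) ^ γ := by
            calc _ ≤ |φ (Xf s, Yf s) * ((Yf s) ^ γ - (Y₀ s) ^ γ)|
                + |(φ (Xf s, Yf s) - φ (X₀ s, Y₀ s)) * (Y₀ s) ^ γ| := abs_add_le _ _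
              _ = _ := by rw [abs_mul, abs_mul, abs_of_nonneg e3']
        _ ≤ M * (γ * m ^ (γ - 1) * g s) + ((Kφ:ℝ) * g s) * (1 + B) := by
            apply add_le_add
            · exact mul_le_mul (hMb _)
                (e1.trans (mul_le_mul_of_nonneg_left hΔ hcoef))
                (abs_nonneg _) hM0.le
            · exact mul_le_mul e2 e3 e3'
                (mul_nonneg Kφ.coe_nonneg (hgnn s))
        _ = Lφ * g s := by rw [hLφdef]; ring
    have hYb : |Yf t - Y₀ t| ≤ Lφ * (∫ s in (0:ℝ)..t, g s) + α := by
      rw [hYd]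
      calc |(∫ s in (0:ℝ)..t,
              (φ (Xf s, Yf s) * (Yf s) ^ γ - φ (X₀ s, Y₀ s) * (Y₀ s) ^ γ)) + (f t).2|
          ≤ |∫ s in (0:ℝ)..t,
              (φ (Xf s, Yf s) * (Yf s) ^ γ - φ (X₀ s, Y₀ s) * (Y₀ s) ^ γ)| + |(f t).2| :=
            abs_add_le _ _
        _ ≤ (∫ s in (0:ℝ)..t,
              |φ (Xf s, Yf s) * (Yf s) ^ γ - φ (X₀ s, Y₀ s) * (Y₀ s) ^ γ|) + α := by
            apply add_le_add
            · exact intervalIntegral.abs_integral_le_integral_abs ht.1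
            · have := norm_snd_le (f t)
              rw [Real.norm_eq_abs] at this
              exact this.trans (hfα t htT).le
        _ ≤ (∫ s in (0:ℝ)..t, Lφ * g s) + α := by
            apply add_le_add_left
            exact intervalIntegral.integral_mono_on ht.1
              (hInt htT ((hFfc.sub hF₀c).abs)) (hInt htT (continuousOn_const.mul hgc)) hFpt
        _ = Lφ * (∫ s in (0:ℝ)..t, g s) + α := by
            rw [intervalIntegral.integral_const_mul]
    have hintnn : (0:ℝ) ≤ ∫ s in (0:ℝ)..t, g s :=
      intervalIntegral.integral_nonneg ht.1 (fun s _ => hgnn s)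
    have : g t = ‖Xf t - X₀ t‖ + |Yf t - Y₀ t| := rfl
    rw [this, hLdef]
    nlinarith [hXb, hYb, hintnn]
  have hgron : ∀ t ∈ Icc (0:ℝ) τ, g t ≤ δ' / 2 := by
    set c : ℝ → ℝ := fun s => max 0 (min s τ) with hcdef
    have hcc : Continuous c := continuous_const.max (continuous_id.min continuous_const)
    have hcmem : ∀ s, c s ∈ Icc (0:ℝ) τ :=
      fun s => ⟨le_max_left _ _, max_le hτ0 (min_le_right _ _)⟩
    have hceq : ∀ s ∈ Icc (0:ℝ) τ, c s = s := fun s hs => by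
      simp only [hcdef]; rw [min_eq_left hs.2, max_eq_right hs.1]
    have hgcτ : ContinuousOn g (Icc 0 τ) := hgc.mono (Icc_subset_Icc le_rfl hτT)
    have hub : Continuous fun s => g (c s) := hgcτ.comp_continuous hcc hcmem
    have hgr := gronwall_int (b := τ) (a := 2 * α) hL0 hub (fun s => hgnn _) ?_
    · intro t ht
      have h1 := hgr t ht
      rw [hceq t ht] at h1
      have h2 : Real.exp (L * t) ≤ Real.exp (L * T) :=
        Real.exp_le_exp.2 (mul_le_mul_of_nonneg_left (ht.2.trans hτT) hL0.le)
      calc g t ≤ 2 * α * Real.exp (L * t) := h1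
        _ ≤ 2 * α * Real.exp (L * T) := by
            apply mul_le_mul_of_nonneg_left h2 (by positivity)
        _ = δ' / 2 := hkey
    · intro t ht
      rw [hceq t ht]
      have hieq : (∫ s in (0:ℝ)..t, g (c s)) = ∫ s in (0:ℝ)..t, g s := by
        apply intervalIntegral.integral_congr
        intro s hs
        rw [uIcc_of_le ht.1] at hs
        exact congrArg g (hceq s ⟨hs.1, hs.2.trans ht.2⟩)
      rw [hieq]
      exact hmain t ht
  -- τ = T
  have hτeq : τ = T := by
    by_contra hne
    have hτlt : τ < T := lt_of_le_of_ne hτT hne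
    have hgτ : g τ < δ' := lt_of_le_of_lt (hgron τ ⟨hτ0, le_rfl⟩) (by linarith)
    have hev : ∀ᶠ s in 𝓝[Icc (0:ℝ) T] τ, g s < δ' :=
      ((hgc τ hτmem).eventually_lt_const hgτ)
    rw [Filter.eventually_iff, Metric.mem_nhdsWithin_iff] at hev
    obtain ⟨ε, hε0, hev⟩ := hev
    set t' : ℝ := min (τ + ε / 2) T with ht'def
    have ht'τ : τ < t' := lt_min (by linarith) hτlt
    have ht'A : t' ∈ A := by
      constructor
      · exact ⟨hτ0.trans ht'τ.le, min_le_right _ _⟩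
      · intro s hs
        rcases le_or_gt s τ with h | h
        · exact Hτ s ⟨hs.1, h⟩
        · apply le_of_lt
          have hball : s ∈ Metric.ball τ ε := by
            rw [Metric.mem_ball, Real.dist_eq, abs_of_nonneg (by linarith)]
            have : s ≤ τ + ε / 2 := hs.2.trans (min_le_left _ _)
            linarith
          exact hev ⟨hball, hs.1, hs.2.trans (min_le_right _ _)⟩
    exact absurd (le_csSup hAbdd ht'A) (not_le.2 ht'τ)
  intro t ht
  have : g t ≤ δ' := Hτ t (hτeq ▸ ht)
  calc ‖Xf t - X₀ t‖ + |Yf t - Y₀ t| = g t := rfl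
    _ ≤ δ' := this
    _ ≤ δ := hδ'δ
end

section
/- For every A > 0 and every γ ∈ (0,1), lim_{u→+∞} u^{−(1−γ)/(γ+1)} ∫₀ᵘ exp(−2At/(γ+1)) (∫₀ᵗ exp(2As/(γ+1)) s^{−γ/(γ+1)} ds) t^{−γ/(γ+1)} dt = (γ+1)² / (2A(1−γ)). -/
open MeasureTheory Filter intervalIntegral

lemma ratio_tendsto (a L : ℝ) (f g : ℝ → ℝ)
    (hf : ∀ u, a ≤ u → IntervalIntegrable f volume a u)
    (hg : ∀ u, a ≤ u → IntervalIntegrable g volume a u)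
    (hgpos : ∀ᶠ t in atTop, 0 < g t)
    (hG : Tendsto (fun u => ∫ t in a..u, g t) atTop atTop)
    (hfg : Tendsto (fun t => f t / g t) atTop (nhds L)) :
    Tendsto (fun u => (∫ t in a..u, f t) / (∫ t in a..u, g t)) atTop (nhds L) := by
  rw [Metric.tendsto_nhds]
  intro ε hε
  have hhalf : 0 < ε / 2 := by positivity
  have hev : ∀ᶠ t in atTop, |f t - L * g t| ≤ ε / 2 * g t ∧ 0 < g t := by
    filter_upwards [hgpos, (Metric.tendsto_nhds.1 hfg) (ε/2) hhalf] with t h1 h2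
    refine ⟨?_, h1⟩
    have he : f t - L * g t = (f t / g t - L) * g t := by field_simp
    rw [he, abs_mul, abs_of_pos h1]
    exact mul_le_mul_of_nonneg_right (by simpa [Real.dist_eq] using h2.le) h1.le
  obtain ⟨T, hT⟩ := (eventually_atTop.1 (hev.and (eventually_ge_atTop a)))
  have haT : a ≤ T := (hT T le_rfl).2
  set C : ℝ := |∫ t in a..T, f t| + |L| * |∫ t in a..T, g t| + ε/2 * |∫ t in a..T, g t| with hC
  have hC0 : 0 ≤ C := by positivity
  filter_upwards [eventually_ge_atTop T, hG.eventually_gt_atTop (max 0 (2*(C+1)/ε))]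
    with u huT hGu
  have hau : a ≤ u := haT.trans huT
  have hNg0 : 0 < ∫ t in a..u, g t := lt_of_le_of_lt (le_max_left _ _) hGu
  have hfTu : IntervalIntegrable f volume T u := ((hf T haT).symm.trans (hf u hau))
  have hgTu : IntervalIntegrable g volume T u := ((hg T haT).symm.trans (hg u hau))
  have splitf : (∫ t in a..u, f t) = (∫ t in a..T, f t) + ∫ t in T..u, f t :=
    (integral_add_adjacent_intervals (hf T haT) hfTu).symm
  have splitg : (∫ t in a..u, g t) = (∫ t in a..T, g t) + ∫ t in T..u, g t :=
    (integral_add_adjacent_intervals (hg T haT) hgTu).symm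
  have key : |(∫ t in T..u, f t) - L * ∫ t in T..u, g t| ≤ ε/2 * ∫ t in T..u, g t := by
    have h1 : (∫ t in T..u, f t) - L * ∫ t in T..u, g t = ∫ t in T..u, (f t - L * g t) := by
      rw [integral_sub hfTu (hgTu.const_mul L), intervalIntegral.integral_const_mul]
    rw [h1]
    calc |∫ t in T..u, (f t - L * g t)| ≤ ∫ t in T..u, |f t - L * g t| :=
          abs_integral_le_integral_abs huT
      _ ≤ ∫ t in T..u, ε/2 * g t := by
          apply integral_mono_on huT ((hfTu.sub (hgTu.const_mul L)).abs) (hgTu.const_mul (ε/2))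
          intro x hx
          exact (hT x hx.1).1.1
      _ = ε/2 * ∫ t in T..u, g t := intervalIntegral.integral_const_mul _ _
  have hbound : |(∫ t in a..u, f t) - L * ∫ t in a..u, g t| ≤ C + ε/2 * ∫ t in a..u, g t := by
    have e1 : (∫ t in a..u, f t) - L * ∫ t in a..u, g t
        = ((∫ t in a..T, f t) - L * ∫ t in a..T, g t)
          + ((∫ t in T..u, f t) - L * ∫ t in T..u, g t) := by
      rw [splitf, splitg]; ring
    rw [e1]
    have hTug : (∫ t in T..u, g t) = (∫ t in a..u, g t) - ∫ t in a..T, g t := by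
      rw [splitg]; ring
    calc _ ≤ |(∫ t in a..T, f t) - L * ∫ t in a..T, g t|
            + |(∫ t in T..u, f t) - L * ∫ t in T..u, g t| := abs_add_le _ _
      _ ≤ (|∫ t in a..T, f t| + |L| * |∫ t in a..T, g t|)
            + ε/2 * ((∫ t in a..u, g t) - ∫ t in a..T, g t) := by
          have h1 : |(∫ t in a..T, f t) - L * ∫ t in a..T, g t|
              ≤ |∫ t in a..T, f t| + |L| * |∫ t in a..T, g t| :=
            (abs_sub _ _).trans (by rw [abs_mul])
          rw [← hTug]
          linarith [key, h1]
      _ ≤ C + ε/2 * ∫ t in a..u, g t := by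
          nlinarith [hC, neg_le_abs (∫ t in a..T, g t), hhalf.le]
  have hCNg : C / (∫ t in a..u, g t) < ε / 2 := by
    have h2 : 2*(C+1)/ε < ∫ t in a..u, g t := lt_of_le_of_lt (le_max_right _ _) hGu
    rw [div_lt_iff₀ hNg0]
    have h3 := (div_lt_iff₀ hε).1 h2
    ring_nf at h3 ⊢
    linarith
  rw [Real.dist_eq]
  have e2 : (∫ t in a..u, f t) / (∫ t in a..u, g t) - L
      = ((∫ t in a..u, f t) - L * ∫ t in a..u, g t) / (∫ t in a..u, g t) := by
    field_simp
  rw [e2, abs_div, abs_of_pos hNg0]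
  calc |(∫ t in a..u, f t) - L * ∫ t in a..u, g t| / (∫ t in a..u, g t)
      ≤ (C + ε/2 * ∫ t in a..u, g t) / (∫ t in a..u, g t) := by gcongr
    _ = C / (∫ t in a..u, g t) + ε/2 := by
        rw [add_div, mul_div_assoc, div_self hNg0.ne', mul_one]
    _ < ε/2 + ε/2 := by linarith
    _ = ε := by ring

lemma shift_tendsto (N D : ℝ → ℝ) (c c' L : ℝ)
    (hND : Tendsto (fun u => N u / D u) atTop (nhds L))
    (hD : Tendsto D atTop atTop) :
    Tendsto (fun u => (c + N u) / (c' + D u)) atTop (nhds L) := by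
  have h1 : Tendsto (fun u => c / D u) atTop (nhds 0) := tendsto_const_nhds.div_atTop hD
  have h2 : Tendsto (fun u => c' / D u) atTop (nhds 0) := tendsto_const_nhds.div_atTop hD
  have h4 : Tendsto (fun u => c' / D u + 1) atTop (nhds 1) := by
    simpa using h2.add (tendsto_const_nhds (x := (1:ℝ)))
  have h5 : Tendsto (fun u => c / D u + N u / D u) atTop (nhds L) := by
    simpa using h1.add hND
  have h3 : Tendsto (fun u => (c / D u + N u / D u) / (c' / D u + 1)) atTop (nhds L) := by
    have := h5.div h4 one_ne_zero; rw [div_one] at this; exact this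
  refine h3.congr' ?_
  filter_upwards [hD.eventually_gt_atTop 0, hD.eventually_gt_atTop (|c'| + 1)] with u hu hu'
  have hD0 : D u ≠ 0 := hu.ne'
  have hcD : c' + D u ≠ 0 := by nlinarith [neg_abs_le c']
  field_simp

lemma main_aux (α β : ℝ) (hα : 0 < α) (hβ1 : -(1/2) < β) (hβ0 : β < 0) :
    Tendsto (fun u : ℝ => u ^ (-(2*β+1)) *
      ∫ t in (0:ℝ)..u, Real.exp (-(α*t)) *
        (∫ s in (0:ℝ)..t, Real.exp (α*s) * s ^ β) * t ^ β)
      atTop (nhds (1/(α*(2*β+1)))) := by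
  have hβ1' : -1 < β := by linarith
  have h2b : 0 < 2*β+1 := by linarith
  set f : ℝ → ℝ := fun s => Real.exp (α*s) * s ^ β with hf_def
  have hfint : ∀ a b : ℝ, IntervalIntegrable f volume a b := fun a b =>
    (intervalIntegral.intervalIntegrable_rpow' hβ1').continuousOn_mul
      (Real.continuous_exp.comp (continuous_const.mul continuous_id)).continuousOn
  set I : ℝ → ℝ := fun t => ∫ s in (0:ℝ)..t, f s with hI_def
  have hIcont : Continuous I := intervalIntegral.continuous_primitive hfint 0
  set G : ℝ → ℝ := fun t => α⁻¹ * (Real.exp (α*t) * t ^ β) with hG_def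
  set g1 : ℝ → ℝ := fun t => Real.exp (α*t) * t ^ β
      + α⁻¹*β*(Real.exp (α*t) * t ^ (β-1)) with hg1_def
  set a₁ : ℝ := 1 - β/α with ha₁_def
  have ha₁pos : 0 < a₁ := by
    have hba : β/α < 0 := div_neg_of_neg_of_pos hβ0 hα
    rw [ha₁_def]; linarith
  -- derivative of G
  have hderiv : ∀ t : ℝ, 0 < t → HasDerivAt G (g1 t) t := by
    intro t ht
    have h1 : HasDerivAt (fun x : ℝ => Real.exp (α*x)) (Real.exp (α*t) * α) t := by
      simpa [mul_comm] using ((hasDerivAt_id t).const_mul α).exp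
    have h2 : HasDerivAt (fun x : ℝ => x ^ β) (β * t ^ (β-1)) t :=
      Real.hasDerivAt_rpow_const (Or.inl ht.ne')
    have h3 := ((h1.mul h2).const_mul α⁻¹)
    refine h3.congr_deriv ?_
    rw [show α⁻¹ * (Real.exp (α*t) * α * t ^ β + Real.exp (α*t) * (β * t ^ (β-1)))
        = (α⁻¹*α) * (Real.exp (α*t) * t ^ β) + α⁻¹*β*(Real.exp (α*t) * t ^ (β-1)) from by ring,
      inv_mul_cancel₀ hα.ne', one_mul]
  -- continuity of g1 on positives
  have hg1cont : ∀ u : ℝ, a₁ ≤ u → IntervalIntegrable g1 volume a₁ u := by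
    intro u hu
    apply ContinuousOn.intervalIntegrable
    have hsub : Set.uIcc a₁ u ⊆ {t : ℝ | 0 < t} := by
      rw [Set.uIcc_of_le hu]
      intro x hx
      exact lt_of_lt_of_le ha₁pos hx.1
    have hrp : ∀ (p : ℝ), ContinuousOn (fun t : ℝ => t ^ p) (Set.uIcc a₁ u) := by
      intro p x hx
      exact (Real.continuousAt_rpow_const x p (Or.inl (hsub hx).ne')).continuousWithinAt
    have hec : ContinuousOn (fun t : ℝ => Real.exp (α*t)) (Set.uIcc a₁ u) :=
      (Real.continuous_exp.comp (continuous_const.mul continuous_id)).continuousOn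
    exact (hec.mul (hrp β)).add (continuousOn_const.mul (hec.mul (hrp (β-1))))
  have hFTC : ∀ u : ℝ, a₁ ≤ u → (∫ t in a₁..u, g1 t) = G u - G a₁ := by
    intro u hu
    refine intervalIntegral.integral_eq_sub_of_hasDerivAt (fun t ht => ?_) (hg1cont u hu)
    rw [Set.uIcc_of_le hu] at ht
    exact hderiv t (lt_of_lt_of_le ha₁pos ht.1)
  have hGtop : Tendsto G atTop atTop := by
    have e := tendsto_exp_mul_div_rpow_atTop (-β) α hα
    have e2 := e.const_mul_atTop (inv_pos.2 hα)
    refine e2.congr' ?_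
    filter_upwards [eventually_gt_atTop (0:ℝ)] with u hu
    rw [hG_def]
    rw [Real.rpow_neg hu.le, div_eq_mul_inv, inv_inv]
  have hD1top : Tendsto (fun u => ∫ t in a₁..u, g1 t) atTop atTop := by
    refine (tendsto_atTop_add_const_right atTop (-(G a₁)) hGtop).congr' ?_
    filter_upwards [eventually_ge_atTop a₁] with u hu
    rw [hFTC u hu, sub_eq_add_neg]
  have hg1pos : ∀ᶠ t in atTop, 0 < g1 t := by
    filter_upwards [eventually_ge_atTop a₁] with t ht
    have ht0 : 0 < t := lt_of_lt_of_le ha₁pos ht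
    have hfac : g1 t = Real.exp (α*t) * t ^ (β-1) * (t + β/α) := by
      rw [hg1_def]
      have h2 : t ^ β = t ^ (β-1) * t := by
        rw [← Real.rpow_add_one ht0.ne', sub_add_cancel]
      simp only [h2]
      field_simp
    rw [hfac]
    have htc : 0 < t + β/α := by rw [ha₁_def] at ht; linarith
    positivity
  have hfg1 : Tendsto (fun t => f t / g1 t) atTop (nhds 1) := by
    have base : Tendsto (fun t : ℝ => 1 - (β/α) / (t + β/α)) atTop (nhds 1) := by
      have := tendsto_const_nhds (x := (β/α)) (f := atTop (α := ℝ))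
      have hd := this.div_atTop (tendsto_atTop_add_const_right atTop (β/α) tendsto_id)
      simpa using (tendsto_const_nhds (x := (1:ℝ))).sub hd
    refine base.congr' ?_
    filter_upwards [eventually_ge_atTop a₁] with t ht
    have ht0 : 0 < t := lt_of_lt_of_le ha₁pos ht
    have htc : 0 < t + β/α := by rw [ha₁_def] at ht; linarith
    have h2 : t ^ β = t ^ (β-1) * t := by
      rw [← Real.rpow_add_one ht0.ne', sub_add_cancel]
    have hfac : g1 t = Real.exp (α*t) * t ^ (β-1) * (t + β/α) := by
      rw [hg1_def]
      simp only [h2]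
      field_simp
    have key : f t / g1 t = 1 - (β/α)/(t + β/α) := by
      have hf_eq : f t = Real.exp (α*t) * t ^ (β-1) * t := by
        simp only [hf_def]; rw [h2]; ring
      have hne : Real.exp (α*t) * t ^ (β-1) ≠ 0 := by positivity
      rw [hfac, hf_eq, mul_div_mul_left _ _ hne]
      have hne2 : 0 < t*α + β := by
        have h := mul_pos htc hα
        rw [add_mul, div_mul_cancel₀ _ hα.ne'] at h
        exact h
      field_simp [hne2.ne']
      ring
    rw [key]
  have step1 := ratio_tendsto a₁ 1 f g1 (fun u _ => hfint a₁ u) hg1cont hg1pos hD1top hfg1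
  have h1 : Tendsto (fun u => I u / G u) atTop (nhds 1) := by
    have := shift_tendsto (fun u => ∫ t in a₁..u, f t) (fun u => ∫ t in a₁..u, g1 t)
      (∫ t in (0:ℝ)..a₁, f t) (G a₁) 1 step1 hD1top
    refine this.congr' ?_
    filter_upwards [eventually_ge_atTop a₁] with u hu
    have hsp : (∫ t in (0:ℝ)..a₁, f t) + ∫ t in a₁..u, f t = I u :=
      intervalIntegral.integral_add_adjacent_intervals (hfint 0 a₁) (hfint a₁ u)
    rw [hsp, hFTC u hu]
    ring_nf
  -- Step 2
  set F : ℝ → ℝ := fun t => Real.exp (-(α*t)) * I t * t ^ β with hF_def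
  have hFint : ∀ a b : ℝ, IntervalIntegrable F volume a b := fun a b =>
    (intervalIntegral.intervalIntegrable_rpow' hβ1').continuousOn_mul
      (((Real.continuous_exp.comp (continuous_const.mul continuous_id).neg).mul
        hIcont).continuousOn)
  set g2 : ℝ → ℝ := fun t => t ^ (2*β) with hg2_def
  have h2β : -1 < 2*β := by linarith
  have hg2int : ∀ u : ℝ, (1:ℝ) ≤ u → IntervalIntegrable g2 volume 1 u := fun u _ =>
    intervalIntegral.intervalIntegrable_rpow' h2β
  have hg2pos : ∀ᶠ t in atTop, 0 < g2 t := by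
    filter_upwards [eventually_gt_atTop (0:ℝ)] with t ht
    exact Real.rpow_pos_of_pos ht _
  have hD2 : ∀ u : ℝ, (1:ℝ) ≤ u → (∫ t in (1:ℝ)..u, g2 t) = (u^(2*β+1) - 1)/(2*β+1) := by
    intro u hu
    simp only [hg2_def]
    rw [integral_rpow (Or.inl h2β), Real.one_rpow]
  have hD2top : Tendsto (fun u => ∫ t in (1:ℝ)..u, g2 t) atTop atTop := by
    have h := (tendsto_atTop_add_const_right atTop (-1) (tendsto_rpow_atTop h2b)).atTop_div_const
      h2b
    refine h.congr' ?_
    filter_upwards [eventually_ge_atTop (1:ℝ)] with u hu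
    rw [hD2 u hu, sub_eq_add_neg]
  have hfg2 : Tendsto (fun t => F t / g2 t) atTop (nhds α⁻¹) := by
    have base : Tendsto (fun t => I t / G t * α⁻¹) atTop (nhds α⁻¹) := by
      simpa using h1.mul_const α⁻¹
    refine base.congr' ?_
    filter_upwards [eventually_gt_atTop (0:ℝ)] with t ht
    have htβ : (0:ℝ) < t ^ β := Real.rpow_pos_of_pos ht β
    have he : (0:ℝ) < Real.exp (α*t) := Real.exp_pos _
    have e3 : t ^ (2*β) = t ^ β * t ^ β := by rw [← Real.rpow_add ht]; ring_nf
    simp only [hF_def, hg2_def, hG_def]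
    rw [Real.exp_neg, e3]
    field_simp
  have step2 := ratio_tendsto 1 α⁻¹ F g2 (fun u _ => hFint 1 u) hg2int hg2pos hD2top hfg2
  have h2 : Tendsto (fun u => (∫ t in (0:ℝ)..u, F t) / (u^(2*β+1)/(2*β+1)))
      atTop (nhds α⁻¹) := by
    have := shift_tendsto (fun u => ∫ t in (1:ℝ)..u, F t) (fun u => ∫ t in (1:ℝ)..u, g2 t)
      (∫ t in (0:ℝ)..1, F t) (1/(2*β+1)) α⁻¹ step2 hD2top
    refine this.congr' ?_
    filter_upwards [eventually_ge_atTop (1:ℝ)] with u hu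
    have hsp : (∫ t in (0:ℝ)..1, F t) + ∫ t in (1:ℝ)..u, F t = ∫ t in (0:ℝ)..u, F t :=
      intervalIntegral.integral_add_adjacent_intervals (hFint 0 1) (hFint 1 u)
    rw [hD2 u hu, hsp]
    congr 1
    field_simp
    ring
  have final := h2.mul_const (2*β+1)⁻¹
  rw [show (1:ℝ)/(α*(2*β+1)) = α⁻¹*(2*β+1)⁻¹ from by rw [one_div, mul_inv]]
  refine final.congr' ?_
  filter_upwards [eventually_gt_atTop (0:ℝ)] with u hu
  have hu1 : u ^ (2*β+1) ≠ 0 := (Real.rpow_pos_of_pos hu _).ne'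
  rw [Real.rpow_neg hu.le]
  simp only [hF_def, hI_def]
  field_simp

/-- Asymptotics of the iterated integral
`∫₀ᵘ e^{-2At/(γ+1)} (∫₀ᵗ e^{2As/(γ+1)} s^{-γ/(γ+1)} ds) t^{-γ/(γ+1)} dt
  ∼ (γ+1)²/(2A(1-γ)) · u^{(1-γ)/(γ+1)}` as `u → +∞`. -/
theorem stmt4 (A γ : ℝ) (hA : 0 < A) (hγ : γ ∈ Set.Ioo (0:ℝ) 1) :
    Tendsto (fun u : ℝ => u ^ (-((1 - γ)/(γ+1))) *
      ∫ t in (0:ℝ)..u, Real.exp (-2*A*t/(γ+1)) *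
        (∫ s in (0:ℝ)..t, Real.exp (2*A*s/(γ+1)) * s ^ (-γ/(γ+1))) * t ^ (-γ/(γ+1)))
      atTop (nhds ((γ+1)^2 / (2*A*(1-γ)))) := by
  obtain ⟨hγ0, hγ1⟩ := hγ
  have hγp : (0:ℝ) < γ+1 := by linarith
  have h1γ : (0:ℝ) < 1-γ := by linarith
  have hb1 : -(1/2:ℝ) < -γ/(γ+1) := by
    have hhalf : γ/(γ+1) < 1/2 := by rw [div_lt_iff₀ hγp]; linarith
    rw [neg_div]; linarith
  have hb0 : -γ/(γ+1) < 0 := by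
    rw [neg_div]; exact neg_lt_zero.mpr (div_pos hγ0 hγp)
  have key := main_aux (2*A/(γ+1)) (-γ/(γ+1)) (by positivity) hb1 hb0
  have e1 : -((1 - γ)/(γ+1)) = -(2*(-γ/(γ+1))+1) := by field_simp; ring
  have e2 : ∀ t : ℝ, -2*A*t/(γ+1) = -(2*A/(γ+1)*t) := fun t => by ring
  have e3 : ∀ s : ℝ, 2*A*s/(γ+1) = 2*A/(γ+1)*s := fun s => by ring
  have e4 : (γ+1)^2/(2*A*(1-γ)) = 1/((2*A/(γ+1))*(2*(-γ/(γ+1))+1)) := by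
    rw [eq_div_iff]
    · field_simp
      ring
    · have : (0:ℝ) < (2*A/(γ+1))*(2*(-γ/(γ+1))+1) := by
        apply mul_pos (by positivity)
        rw [neg_div]
        have : γ/(γ+1) < 1/2 := by rw [div_lt_iff₀ hγp]; linarith
        linarith
      exact this.ne'
  rw [e4]
  simp only [e1, e2, e3]
  exact key
end

section
/- For A > 0, γ ∈ (0,1) and ε > 0, define v_ε : ℝ → ℝ by v_ε(x) = ∫₀^{|x|} exp(−2A y^{γ+1}/((γ+1)ε²)) (∫₀^y (2/ε²) exp(2A z^{γ+1}/((γ+1)ε²)) dz) dy. Then for every fixed x ≠ 0, lim_{ε→0⁺} v_ε(x) = |x|^{1−γ} / (A(1−γ)). -/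
open MeasureTheory Filter

open Set

lemma expc_cont (c p : ℝ) (hp : 0 ≤ p) :
    Continuous fun z : ℝ => Real.exp (c * z ^ p) :=
  Real.continuous_exp.comp (continuous_const.mul
    (continuous_iff_continuousAt.2 fun z => Real.continuousAt_rpow_const z p (Or.inr hp)))

lemma integral_exp_affine (m d a b : ℝ) (hm : m ≠ 0) :
    ∫ z in a..b, Real.exp (m*z + d) = (Real.exp (m*b+d) - Real.exp (m*a+d))/m := by
  have D : ∀ z : ℝ, HasDerivAt (fun z => Real.exp (m*z+d)/m) (Real.exp (m*z+d)) z := by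
    intro z
    have h1 : HasDerivAt (fun z : ℝ => m*z+d) m z := by
      simpa using ((hasDerivAt_id z).const_mul m).add_const d
    have h2 := h1.exp.div_const m
    rwa [mul_div_cancel_right₀ _ hm] at h2
  rw [intervalIntegral.integral_eq_sub_of_hasDerivAt (fun z _ => D z)
    ((Real.continuous_exp.comp (by continuity)).intervalIntegrable a b)]
  ring

lemma tangent_le {p y : ℝ} (hp : 1 ≤ p) (hy : 0 < y) {z : ℝ} (hz0 : 0 ≤ z) :
    y ^ p + p * y ^ (p-1) * (z - y) ≤ z ^ p := by
  have hs : -1 ≤ z/y - 1 := by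
    have := div_nonneg hz0 hy.le; linarith
  have h := one_add_mul_self_le_rpow_one_add hs hp
  have h2 : (1 + (z/y - 1)) = z/y := by ring
  rw [h2, Real.div_rpow hz0 hy.le] at h
  have hyp : 0 < y ^ p := Real.rpow_pos_of_pos hy p
  have h3 := mul_le_mul_of_nonneg_left h hyp.le
  have h4 : y ^ p * (z ^ p / y ^ p) = z ^ p := by field_simp
  rw [h4] at h3
  have h5 : y ^ (p-1) * y = y ^ p := by
    rw [← Real.rpow_add_one hy.ne']; ring_nf
  calc y ^ p + p * y ^ (p-1) * (z - y)
      = y ^ p * (1 + p * (z/y - 1)) := by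
        field_simp
        linear_combination p*(z-y)*h5
    _ ≤ z ^ p := h3


lemma g_lower {c p y : ℝ} (hc : 0 < c) (hp : 1 ≤ p) (hy : 0 < y) :
    Real.exp (c*y^p) * (1 - Real.exp (-(c*p*y^p))) / (c*p*y^(p-1))
      ≤ ∫ z in (0:ℝ)..y, Real.exp (c*z^p) := by
  have hp0 : (0:ℝ) < p := lt_of_lt_of_le one_pos hp
  set m := c*p*y^(p-1) with hmdef
  have hm0 : 0 < m := mul_pos (mul_pos hc hp0) (Real.rpow_pos_of_pos hy _)
  have key : ∀ z ∈ Set.Icc (0:ℝ) y, Real.exp (m*z + (c*y^p - m*y)) ≤ Real.exp (c*z^p) := by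
    intro z hz
    apply Real.exp_le_exp.2
    have h1 := tangent_le hp hy hz.1 (z := z)
    rw [hmdef]
    nlinarith [mul_le_mul_of_nonneg_left h1 hc.le]
  have hint1 : IntervalIntegrable (fun z : ℝ => Real.exp (m*z + (c*y^p - m*y))) volume 0 y :=
    (Real.continuous_exp.comp (by continuity)).intervalIntegrable 0 y
  have hint2 := (expc_cont c p hp0.le).intervalIntegrable (μ := volume) 0 y
  have hmono := intervalIntegral.integral_mono_on hy.le hint1 hint2 key
  rw [integral_exp_affine m (c*y^p - m*y) 0 y hm0.ne'] at hmono
  refine le_trans (le_of_eq ?_) hmono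
  have hmy : m*y = c*p*y^p := by
    rw [hmdef, mul_assoc, ← Real.rpow_add_one hy.ne']; ring_nf
  rw [mul_sub, mul_one, ← Real.exp_add]
  rw [show m*y + (c*y^p - m*y) = c*y^p by ring, show m*0 + (c*y^p - m*y) = c*y^p + -(m*y) by ring]
  rw [hmy]

lemma g_upper {c p y θ : ℝ} (hc : 0 < c) (hp : 1 ≤ p) (hy : 0 < y) (hθ : 0 < θ) (hθ1 : θ ≤ 1) :
    ∫ z in (0:ℝ)..y, Real.exp (c*z^p)
      ≤ θ*y*Real.exp (c*(θ*y)^p) + Real.exp (c*y^p)/(c*p*(θ*y)^(p-1)) := by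
  have hp0 : (0:ℝ) < p := lt_of_lt_of_le one_pos hp
  set a := θ*y with hadef
  have ha : 0 < a := mul_pos hθ hy
  have hay : a ≤ y := by
    calc a = θ*y := rfl
    _ ≤ 1*y := by gcongr
    _ = y := one_mul y
  set m := c*p*a^(p-1) with hmdef
  have hm0 : 0 < m := mul_pos (mul_pos hc hp0) (Real.rpow_pos_of_pos ha _)
  have hint : ∀ u v : ℝ, IntervalIntegrable (fun z : ℝ => Real.exp (c*z^p)) volume u v :=
    fun u v => (expc_cont c p hp0.le).intervalIntegrable u v
  have hsplit : ∫ z in (0:ℝ)..y, Real.exp (c*z^p)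
      = (∫ z in (0:ℝ)..a, Real.exp (c*z^p)) + ∫ z in a..y, Real.exp (c*z^p) :=
    (intervalIntegral.integral_add_adjacent_intervals (hint 0 a) (hint a y)).symm
  have part1 : ∫ z in (0:ℝ)..a, Real.exp (c*z^p) ≤ a * Real.exp (c*a^p) := by
    have h1 : ∀ z ∈ Set.Icc (0:ℝ) a, Real.exp (c*z^p) ≤ Real.exp (c*a^p) := by
      intro z hz
      apply Real.exp_le_exp.2
      have : z^p ≤ a^p := Real.rpow_le_rpow hz.1 hz.2 hp0.le
      nlinarith
    have := intervalIntegral.integral_mono_on ha.le (hint 0 a)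
      (intervalIntegrable_const) h1
    simpa using this
  have part2 : ∫ z in a..y, Real.exp (c*z^p) ≤ Real.exp (c*y^p)/m := by
    have key : ∀ z ∈ Set.Icc a y, Real.exp (c*z^p) ≤ Real.exp (m*z + (c*y^p - m*y)) := by
      intro z hz
      apply Real.exp_le_exp.2
      have hz0 : 0 < z := lt_of_lt_of_le ha hz.1
      have h1 := tangent_le hp hz0 hy.le  -- z^p + p z^{p-1}(y-z) ≤ y^p
      have h2 : a^(p-1) ≤ z^(p-1) := Real.rpow_le_rpow ha.le hz.1 (by linarith)
      have hyz : 0 ≤ y - z := by linarith [hz.2]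
      have h3 : p * a^(p-1) * (y - z) ≤ p * z^(p-1) * (y - z) := by
        have h4 := mul_le_mul_of_nonneg_right h2 hyz
        nlinarith [h4]
      nlinarith [mul_le_mul_of_nonneg_left (le_trans (by nlinarith : z^p + p*a^(p-1)*(y-z) ≤ z^p + p*z^(p-1)*(y-z)) (by nlinarith [h1] : z^p + p*z^(p-1)*(y-z) ≤ y^p)) hc.le]
    have hint1 : IntervalIntegrable (fun z : ℝ => Real.exp (m*z + (c*y^p - m*y))) volume a y :=
      (Real.continuous_exp.comp (by continuity)).intervalIntegrable a y
    have hmono := intervalIntegral.integral_mono_on hay (hint a y) hint1 key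
    rw [integral_exp_affine m (c*y^p - m*y) a y hm0.ne'] at hmono
    refine hmono.trans ?_
    rw [show m*y + (c*y^p - m*y) = c*y^p by ring]
    have : 0 < Real.exp (m*a + (c*y^p - m*y)) := Real.exp_pos _
    rw [div_le_div_iff₀ hm0 hm0]
    nlinarith
  calc ∫ z in (0:ℝ)..y, Real.exp (c*z^p)
      = (∫ z in (0:ℝ)..a, Real.exp (c*z^p)) + ∫ z in a..y, Real.exp (c*z^p) := hsplit
    _ ≤ a * Real.exp (c*a^p) + Real.exp (c*y^p)/m := add_le_add part1 part2
    _ = θ*y*Real.exp (c*(θ*y)^p) + Real.exp (c*y^p)/(c*p*(θ*y)^(p-1)) := rfl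


lemma key_lower {A p ε y : ℝ} (hA : 0 < A) (hp : 1 ≤ p) (hε : 0 < ε) (hy : 0 < y) :
    (1 - Real.exp (-(2*A*y^p/ε^2))) * y^(1-p) / A
      ≤ Real.exp (-(2*A/(p*ε^2)*y^p)) * ((2/ε^2) * ∫ z in (0:ℝ)..y, Real.exp (2*A/(p*ε^2)*z^p)) := by
  have hp0 : (0:ℝ) < p := lt_of_lt_of_le one_pos hp
  have hε2 : (0:ℝ) < ε^2 := by positivity
  set c := 2*A/(p*ε^2) with hcdef
  have hc : 0 < c := by positivity
  have hg := g_lower (c := c) (p := p) (y := y) hc hp hy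
  have step : Real.exp (-(c*y^p)) * ((2/ε^2) * (Real.exp (c*y^p) * (1 - Real.exp (-(c*p*y^p))) / (c*p*y^(p-1))))
      ≤ Real.exp (-(c*y^p)) * ((2/ε^2) * ∫ z in (0:ℝ)..y, Real.exp (c*z^p)) := by
    have h2 : (0:ℝ) ≤ 2/ε^2 := by positivity
    exact mul_le_mul_of_nonneg_left (mul_le_mul_of_nonneg_left hg h2) (Real.exp_pos _).le
  refine le_trans (le_of_eq ?_) step
  have hcp : 2*A*y^p/ε^2 = c*p*y^p := by rw [hcdef]; field_simp
  have hcpe : c*p = 2*A/ε^2 := by rw [hcdef]; field_simp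
  have hkey : (2/ε^2)/(c*p) = 1/A := by rw [hcpe]; field_simp
  have hyp1 : (0:ℝ) < y^(p-1) := Real.rpow_pos_of_pos hy _
  have hy1p : y^(1-p) = (y^(p-1))⁻¹ := by
    rw [← Real.rpow_neg hy.le]; ring_nf
  have hE1 : (0:ℝ) < Real.exp (c*y^p) := Real.exp_pos _
  rw [hcp, Real.exp_neg (c*y^p)]
  calc (1 - Real.exp (-(c*p*y^p))) * y^(1-p) / A
      = (1 - Real.exp (-(c*p*y^p))) * ((2/ε^2)/(c*p)) * (y^(p-1))⁻¹ := by
        rw [hkey, hy1p]; ring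
    _ = ((Real.exp (c*y^p))⁻¹ * Real.exp (c*y^p)) * ((1 - Real.exp (-(c*p*y^p))) * ((2/ε^2)/(c*p)) * (y^(p-1))⁻¹) := by
        rw [inv_mul_cancel₀ hE1.ne', one_mul]
    _ = (Real.exp (c*y^p))⁻¹ * (2/ε^2 * (Real.exp (c*y^p) * (1 - Real.exp (-(c*p*y^p))) / (c*p*y^(p-1)))) := by
        ring

lemma key_upper {A p ε y θ : ℝ} (hA : 0 < A) (hp : 1 ≤ p) (hε : 0 < ε) (hy : 0 < y)
    (hθ : 0 < θ) (hθ1 : θ ≤ 1) :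
    Real.exp (-(2*A/(p*ε^2)*y^p)) * ((2/ε^2) * ∫ z in (0:ℝ)..y, Real.exp (2*A/(p*ε^2)*z^p))
      ≤ (2*θ*y/ε^2) * Real.exp (-(2*A/(p*ε^2)*(1-θ^p)*y^p)) + (θ*y)^(1-p)/A := by
  have hp0 : (0:ℝ) < p := lt_of_lt_of_le one_pos hp
  have hε2 : (0:ℝ) < ε^2 := by positivity
  set c := 2*A/(p*ε^2) with hcdef
  have hc : 0 < c := by positivity
  have hg := g_upper (c := c) (p := p) (y := y) (θ := θ) hc hp hy hθ hθ1
  have step : Real.exp (-(c*y^p)) * ((2/ε^2) * ∫ z in (0:ℝ)..y, Real.exp (c*z^p))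
      ≤ Real.exp (-(c*y^p)) * ((2/ε^2) * (θ*y*Real.exp (c*(θ*y)^p) + Real.exp (c*y^p)/(c*p*(θ*y)^(p-1)))) := by
    have h2 : (0:ℝ) ≤ 2/ε^2 := by positivity
    exact mul_le_mul_of_nonneg_left (mul_le_mul_of_nonneg_left hg h2) (Real.exp_pos _).le
  refine step.trans (le_of_eq ?_)
  have hθy : 0 < θ*y := mul_pos hθ hy
  have hmul : (θ*y)^p = θ^p * y^p := Real.mul_rpow hθ.le hy.le
  have hθyp1 : (0:ℝ) < (θ*y)^(p-1) := Real.rpow_pos_of_pos hθy _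
  have h1p : (θ*y)^(1-p) = ((θ*y)^(p-1))⁻¹ := by
    rw [← Real.rpow_neg hθy.le]; ring_nf
  have hexp2 : Real.exp (-(c*y^p)) * Real.exp (c*(θ*y)^p) = Real.exp (-(c*(1-θ^p)*y^p)) := by
    rw [← Real.exp_add, hmul]; ring_nf
  have hexp3 : Real.exp (-(c*y^p)) * Real.exp (c*y^p) = 1 := by
    rw [← Real.exp_add]; simp
  have hcpe : c*p = 2*A/ε^2 := by rw [hcdef]; field_simp
  rw [h1p]
  calc Real.exp (-(c*y^p)) * ((2/ε^2) * (θ*y*Real.exp (c*(θ*y)^p) + Real.exp (c*y^p)/(c*p*(θ*y)^(p-1))))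
      = (2*θ*y/ε^2) * (Real.exp (-(c*y^p)) * Real.exp (c*(θ*y)^p))
        + (2/ε^2) * (Real.exp (-(c*y^p)) * Real.exp (c*y^p)) / (c*p*(θ*y)^(p-1)) := by ring
    _ = (2*θ*y/ε^2) * Real.exp (-(c*(1-θ^p)*y^p)) + (2/ε^2) / ((2*A/ε^2)*(θ*y)^(p-1)) := by
        rw [hexp2, hexp3, hcpe]; ring
    _ = (2*θ*y/ε^2) * Real.exp (-(c*(1-θ^p)*y^p)) + ((θ*y)^(p-1))⁻¹/A := by
        congr 1
        field_simp


lemma pointwise_lim {A p y : ℝ} (hA : 0 < A) (hp : 1 < p) (hy : 0 < y) :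
    Tendsto (fun ε : ℝ => Real.exp (-(2*A/(p*ε^2)*y^p)) *
        ((2/ε^2) * ∫ z in (0:ℝ)..y, Real.exp (2*A/(p*ε^2)*z^p)))
      (nhdsWithin 0 (Set.Ioi 0)) (nhds (y^(1-p)/A)) := by
  have hp0 : (0:ℝ) < p := lt_trans one_pos hp
  have hyp : (0:ℝ) < y^p := Real.rpow_pos_of_pos hy _
  -- lower squeeze function
  have hlow : Tendsto (fun ε : ℝ => (1 - Real.exp (-(2*A*y^p/ε^2))) * y^(1-p) / A)
      (nhdsWithin 0 (Set.Ioi 0)) (nhds (y^(1-p)/A)) := by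
    have h1 : Tendsto (fun ε : ℝ => ε^2) (nhdsWithin 0 (Set.Ioi 0)) (nhdsWithin 0 (Set.Ioi 0)) := by
      rw [tendsto_nhdsWithin_iff]
      constructor
      · have h := ((continuous_pow 2).tendsto (0:ℝ)).mono_left
          (nhdsWithin_le_nhds (s := Set.Ioi 0))
        simpa using h
      · filter_upwards [self_mem_nhdsWithin] with ε hε
        exact pow_pos (show (0:ℝ) < ε from hε) 2
    have h2 : Tendsto (fun ε : ℝ => 2*A*y^p/ε^2) (nhdsWithin 0 (Set.Ioi 0)) atTop := by
      have h2' : Tendsto (fun ε : ℝ => (ε^2)⁻¹) (nhdsWithin 0 (Set.Ioi 0)) atTop :=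
        tendsto_inv_nhdsGT_zero.comp h1
      have h3 := Tendsto.const_mul_atTop (show (0:ℝ) < 2*A*y^p by positivity) h2'
      exact h3.congr fun ε => (div_eq_mul_inv _ _).symm
    have h4 : Tendsto (fun ε : ℝ => Real.exp (-(2*A*y^p/ε^2))) (nhdsWithin 0 (Set.Ioi 0)) (nhds 0) := by
      exact Real.tendsto_exp_neg_atTop_nhds_zero.comp h2
    have hone : Tendsto (fun _ : ℝ => (1:ℝ)) (nhdsWithin 0 (Set.Ioi 0)) (nhds 1) :=
      tendsto_const_nhds
    have h5 := ((hone.sub h4).mul_const (y^(1-p))).div_const A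
    simpa using h5
  -- upper squeeze function
  have hup : Tendsto (fun ε : ℝ => (2*y/ε^2) * Real.exp (-(2*A*y^p/(p*ε))) + ((1-ε)*y)^(1-p)/A)
      (nhdsWithin 0 (Set.Ioi 0)) (nhds (y^(1-p)/A)) := by
    set k := 2*A*y^p/p with hkdef
    have hk : 0 < k := by positivity
    have hφ : Tendsto (fun t : ℝ => t^2 * Real.exp (-(k*t))) atTop (nhds 0) := by
      have h0 := Real.tendsto_pow_mul_exp_neg_atTop_nhds_zero 2
      have h6 : Tendsto (fun t : ℝ => k*t) atTop atTop :=
        Tendsto.const_mul_atTop hk tendsto_id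
      have h7 := (h0.comp h6).const_mul ((k⁻¹)^2)
      rw [mul_zero] at h7
      refine h7.congr fun t => ?_
      simp only [Function.comp]
      rw [show -(k*t) = -(k*t) from rfl]
      field_simp
    have hterm1 : Tendsto (fun ε : ℝ => (2*y/ε^2) * Real.exp (-(2*A*y^p/(p*ε))))
        (nhdsWithin 0 (Set.Ioi 0)) (nhds 0) := by
      have h8 := (hφ.comp tendsto_inv_nhdsGT_zero).const_mul (2*y)
      rw [mul_zero] at h8
      refine h8.congr fun ε => ?_
      simp only [Function.comp]
      rw [show k*ε⁻¹ = 2*A*y^p/(p*ε) by rw [hkdef]; ring]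
      ring
    have hterm2 : Tendsto (fun ε : ℝ => ((1-ε)*y)^(1-p)/A)
        (nhdsWithin 0 (Set.Ioi 0)) (nhds (y^(1-p)/A)) := by
      have hc2 : ContinuousAt (fun w : ℝ => w^(1-p)) y :=
        Real.continuousAt_rpow_const y (1-p) (Or.inl hy.ne')
      have hin : Tendsto (fun ε : ℝ => (1-ε)*y) (nhds 0) (nhds y) := by
        have hcont : Continuous (fun ε : ℝ => (1-ε)*y) := by continuity
        have := hcont.tendsto (0:ℝ)
        simpa using this
      have := (hc2.tendsto.comp hin).div_const A
      exact (this.mono_left nhdsWithin_le_nhds)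
    have := hterm1.add hterm2
    simpa using this
  refine tendsto_of_tendsto_of_tendsto_of_le_of_le' hlow hup ?_ ?_
  · filter_upwards [self_mem_nhdsWithin] with ε hε
    exact key_lower hA hp.le hε hy
  · filter_upwards [Ioo_mem_nhdsGT_of_mem (Set.left_mem_Ico.2 one_pos)]
      with ε hε
    have hε0 : 0 < ε := hε.1
    have hε1 : ε < 1 := hε.2
    have hθ : 0 < 1 - ε := by linarith
    have hθ1 : 1 - ε ≤ 1 := by linarith
    refine (key_upper hA hp.le hε0 hy hθ hθ1).trans ?_
    have hc : 0 < 2*A/(p*ε^2) := by positivity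
    gcongr ?_ + _
    have hθp : (1-ε)^p ≤ 1-ε := by
      have := Real.rpow_le_rpow_of_exponent_ge hθ hθ1 hp.le
      rwa [Real.rpow_one] at this
    have hexp : Real.exp (-(2*A/(p*ε^2)*(1-(1-ε)^p)*y^p)) ≤ Real.exp (-(2*A*y^p/(p*ε))) := by
      apply Real.exp_le_exp.2
      rw [neg_le_neg_iff]
      have harg : 2*A*y^p/(p*ε) = 2*A/(p*ε^2)*ε*y^p := by field_simp
      rw [harg]
      have : ε ≤ 1-(1-ε)^p := by linarith
      have h9 : 2*A/(p*ε^2)*ε ≤ 2*A/(p*ε^2)*(1-(1-ε)^p) := by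
        apply mul_le_mul_of_nonneg_left this hc.le
      exact mul_le_mul_of_nonneg_right h9 hyp.le
    calc (2*(1-ε)*y/ε^2) * Real.exp (-(2*A/(p*ε^2)*(1-(1-ε)^p)*y^p))
        ≤ (2*y/ε^2) * Real.exp (-(2*A/(p*ε^2)*(1-(1-ε)^p)*y^p)) := by
          have h10 : 2*(1-ε)*y ≤ 2*y := by nlinarith
          have h11 : 2*(1-ε)*y/ε^2 ≤ 2*y/ε^2 := by gcongr
          exact mul_le_mul_of_nonneg_right h11 (Real.exp_pos _).le
        _ ≤ (2*y/ε^2) * Real.exp (-(2*A*y^p/(p*ε))) := by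
          apply mul_le_mul_of_nonneg_left hexp (by positivity)


lemma F_le_bound {A p ε y : ℝ} (hA : 0 < A) (hp : 1 ≤ p) (hε : 0 < ε) (hy : 0 < y) :
    Real.exp (-(2*A/(p*ε^2)*y^p)) * ((2/ε^2) * ∫ z in (0:ℝ)..y, Real.exp (2*A/(p*ε^2)*z^p))
      ≤ ((2:ℝ)^(p-1) + p)/A * y^(1-p) := by
  have hp0 : (0:ℝ) < p := lt_of_lt_of_le one_pos hp
  have hε2 : (0:ℝ) < ε^2 := by positivity
  have hyp : (0:ℝ) < y^p := Real.rpow_pos_of_pos hy _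
  have hy1ppos : (0:ℝ) < y^(1-p) := Real.rpow_pos_of_pos hy _
  refine (key_upper hA hp hε hy (θ := 1/2) one_half_pos (by norm_num)).trans ?_
  have hy1p : y * (y^p)⁻¹ = y^(1-p) := by
    rw [show (1:ℝ)-p = 1+(-p) by ring, Real.rpow_add hy, Real.rpow_one, Real.rpow_neg hy.le]
  have hterm1 : (2*(1/2)*y/ε^2) * Real.exp (-(2*A/(p*ε^2)*(1-(1/2:ℝ)^p)*y^p))
      ≤ (p/A) * y^(1-p) := by
    have hhalf : ((1:ℝ)/2)^p ≤ 1/2 := by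
      have := Real.rpow_le_rpow_of_exponent_ge (by norm_num : (0:ℝ) < 1/2) (by norm_num) hp
      rwa [Real.rpow_one] at this
    set u := A*y^p/(p*ε^2) with hudef
    have hu : 0 < u := by positivity
    have hargle : u ≤ 2*A/(p*ε^2)*(1-(1/2:ℝ)^p)*y^p := by
      rw [hudef]
      have h1 : (1:ℝ)/2 ≤ 1-(1/2:ℝ)^p := by linarith
      have h2 : 2*A/(p*ε^2)*(1/2) ≤ 2*A/(p*ε^2)*(1-(1/2:ℝ)^p) :=
        mul_le_mul_of_nonneg_left h1 (by positivity)
      calc A*y^p/(p*ε^2) = 2*A/(p*ε^2)*(1/2)*y^p := by ring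
        _ ≤ 2*A/(p*ε^2)*(1-(1/2:ℝ)^p)*y^p := mul_le_mul_of_nonneg_right h2 hyp.le
    have hexp : Real.exp (-(2*A/(p*ε^2)*(1-(1/2:ℝ)^p)*y^p)) ≤ u⁻¹ := by
      have h3 : Real.exp (-(2*A/(p*ε^2)*(1-(1/2:ℝ)^p)*y^p)) ≤ Real.exp (-u) :=
        Real.exp_le_exp.2 (by linarith)
      refine h3.trans ?_
      rw [Real.exp_neg]
      have h4 : u ≤ Real.exp u := by
        have := Real.add_one_le_exp u; linarith
      exact inv_anti₀ hu h4
    calc (2*(1/2)*y/ε^2) * Real.exp (-(2*A/(p*ε^2)*(1-(1/2:ℝ)^p)*y^p))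
        ≤ (2*(1/2)*y/ε^2) * u⁻¹ := mul_le_mul_of_nonneg_left hexp (by positivity)
      _ = (p/A) * (y * (y^p)⁻¹) := by
          rw [hudef]
          field_simp
      _ = (p/A) * y^(1-p) := by rw [hy1p]
  have hterm2 : ((1/2:ℝ)*y)^(1-p)/A = (2:ℝ)^(p-1) * y^(1-p)/A := by
    rw [Real.mul_rpow (by norm_num) hy.le]
    congr 2
    rw [show ((1:ℝ)/2) = (2:ℝ)⁻¹ by norm_num, ← Real.rpow_neg_one 2,
      ← Real.rpow_mul (by norm_num : (0:ℝ) ≤ 2),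
      show (-1:ℝ)*(1-p) = p-1 by ring]
  rw [hterm2]
  calc (2*(1/2)*y/ε^2) * Real.exp (-(2*A/(p*ε^2)*(1-(1/2:ℝ)^p)*y^p)) + (2:ℝ)^(p-1)*y^(1-p)/A
      ≤ (p/A) * y^(1-p) + (2:ℝ)^(p-1)*y^(1-p)/A := by linarith
    _ = ((2:ℝ)^(p-1) + p)/A * y^(1-p) := by ring


/-- Small-`ε` limit of the Lyapunov function:
`v_ε(x) → |x|^{1-γ}/(A(1-γ))` as `ε → 0⁺`, for every fixed `x ≠ 0`. -/
theorem stmt6 (A γ : ℝ) (hA : 0 < A) (hγ : γ ∈ Set.Ioo (0:ℝ) 1) (x : ℝ) (hx : x ≠ 0) :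
    Tendsto (fun ε : ℝ =>
      ∫ y in (0:ℝ)..|x|, Real.exp (-2*A*y^(γ+1)/((γ+1)*ε^2)) *
        ∫ z in (0:ℝ)..y, (2/ε^2) * Real.exp (2*A*z^(γ+1)/((γ+1)*ε^2)))
      (nhdsWithin 0 (Set.Ioi 0)) (nhds (|x| ^ (1-γ) / (A*(1-γ)))) := by
  obtain ⟨hγ0, hγ1⟩ := hγ
  have hb : 0 < |x| := abs_pos.2 hx
  have hp1 : (1:ℝ) < γ+1 := by linarith
  have hcontp : Continuous fun z : ℝ => z^(γ+1) :=
    continuous_iff_continuousAt.2 fun z =>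
      Real.continuousAt_rpow_const z (γ+1) (Or.inr (by linarith))
  have hrw : ∀ ε y : ℝ, (Real.exp (-2*A*y^(γ+1)/((γ+1)*ε^2)) *
      ∫ z in (0:ℝ)..y, (2/ε^2) * Real.exp (2*A*z^(γ+1)/((γ+1)*ε^2)))
      = Real.exp (-(2*A/((γ+1)*ε^2)*y^(γ+1))) *
        ((2/ε^2) * ∫ z in (0:ℝ)..y, Real.exp (2*A/((γ+1)*ε^2)*z^(γ+1))) := by
    intro ε y
    rw [show -2*A*y^(γ+1)/((γ+1)*ε^2) = -(2*A/((γ+1)*ε^2)*y^(γ+1)) by ring]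
    congr 1
    rw [← intervalIntegral.integral_const_mul]
    apply intervalIntegral.integral_congr
    intro z _
    show 2/ε^2 * Real.exp (2*A*z^(γ+1)/((γ+1)*ε^2))
      = 2/ε^2 * Real.exp (2*A/((γ+1)*ε^2)*z^(γ+1))
    rw [show 2*A*z^(γ+1)/((γ+1)*ε^2) = 2*A/((γ+1)*ε^2)*z^(γ+1) by ring]
  have hfun : (fun ε : ℝ => ∫ y in (0:ℝ)..|x|, Real.exp (-2*A*y^(γ+1)/((γ+1)*ε^2)) *
        ∫ z in (0:ℝ)..y, (2/ε^2) * Real.exp (2*A*z^(γ+1)/((γ+1)*ε^2)))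
      = fun ε : ℝ => ∫ y in Ioc (0:ℝ) |x|, Real.exp (-(2*A/((γ+1)*ε^2)*y^(γ+1))) *
        ((2/ε^2) * ∫ z in (0:ℝ)..y, Real.exp (2*A/((γ+1)*ε^2)*z^(γ+1))) := by
    funext ε
    simp only [hrw]
    rw [intervalIntegral.integral_of_le hb.le]
  rw [hfun]
  have hval : |x|^(1-γ)/(A*(1-γ)) = ∫ y in Ioc (0:ℝ) |x|, y^(1-(γ+1))/A := by
    rw [← intervalIntegral.integral_of_le hb.le, intervalIntegral.integral_div A (fun y : ℝ => y^(1-(γ+1))),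
      integral_rpow (Or.inl (by linarith : (-1:ℝ) < 1-(γ+1))),
      show 1-(γ+1)+1 = 1-γ by ring,
      Real.zero_rpow (by intro h; exact absurd h (by linarith) : (1:ℝ)-γ ≠ 0)]
    rw [sub_zero, div_div]
    congr 1
    ring
  rw [hval]
  apply MeasureTheory.tendsto_integral_filter_of_dominated_convergence
    (bound := fun y : ℝ => ((2:ℝ)^(γ+1-1) + (γ+1))/A * y^(1-(γ+1)))
  · filter_upwards [self_mem_nhdsWithin] with ε hε
    have c1 : Continuous fun y : ℝ => Real.exp (-(2*A/((γ+1)*ε^2)*y^(γ+1))) :=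
      Real.continuous_exp.comp (continuous_const.mul hcontp).neg
    have c2 : Continuous fun y : ℝ => ∫ z in (0:ℝ)..y, Real.exp (2*A/((γ+1)*ε^2)*z^(γ+1)) :=
      intervalIntegral.continuous_primitive
        (fun a b => (expc_cont (2*A/((γ+1)*ε^2)) (γ+1) (by linarith)).intervalIntegrable a b) 0
    exact ((c1.mul (continuous_const.mul c2)).aestronglyMeasurable).restrict
  · filter_upwards [self_mem_nhdsWithin] with ε hε
    rw [ae_restrict_iff' measurableSet_Ioc]
    refine ae_of_all _ fun y hy => ?_
    have hy0 : 0 < y := hy.1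
    have hnn : 0 ≤ Real.exp (-(2*A/((γ+1)*ε^2)*y^(γ+1))) *
        ((2/ε^2) * ∫ z in (0:ℝ)..y, Real.exp (2*A/((γ+1)*ε^2)*z^(γ+1))) := by
      apply mul_nonneg (Real.exp_pos _).le
      apply mul_nonneg (by positivity)
      exact intervalIntegral.integral_nonneg hy0.le fun z _ => (Real.exp_pos _).le
    rw [Real.norm_eq_abs, abs_of_nonneg hnn]
    exact F_le_bound hA hp1.le hε hy0
  · have hInt : IntervalIntegrable
        (fun y : ℝ => ((2:ℝ)^(γ+1-1) + (γ+1))/A * y^(1-(γ+1))) volume 0 |x| :=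
      (intervalIntegral.intervalIntegrable_rpow' (by linarith : (-1:ℝ) < 1-(γ+1))).const_mul _
    exact (intervalIntegrable_iff_integrableOn_Ioc_of_le hb.le).1 hInt
  · rw [ae_restrict_iff' measurableSet_Ioc]
    refine ae_of_all _ fun y hy => ?_
    exact pointwise_lim hA hp1 hy.1
end

section
/- For A > 0, γ ∈ (0,1) and ε > 0, define v_ε : ℝ → ℝ by v_ε(x) = ∫₀^{|x|} exp(−2A y^{γ+1}/((γ+1)ε²)) (∫₀^y (2/ε²) exp(2A z^{γ+1}/((γ+1)ε²)) dz) dy. Then v_ε(0) = 0, v_ε is twice continuously differentiable on (0,∞), v_ε′(x) ≥ 0 for all x > 0, and A x^γ v_ε′(x) + (ε²/2) v_ε″(x) = 1 for all x > 0. Consequently, for every a ≥ A and every x > 0, a x^γ v_ε′(x) + (ε²/2) v_ε″(x) ≥ 1. -/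
open MeasureTheory

private lemma ftc {f : ℝ → ℝ} (hf : Continuous f) (a x : ℝ) :
    HasDerivAt (fun u => ∫ t in a..u, f t) (f x) x :=
  intervalIntegral.integral_hasDerivAt_right (hf.intervalIntegrable a x)
    (hf.stronglyMeasurableAtFilter _ _) hf.continuousAt

/-- Lyapunov property of `v_ε`: `v_ε(0) = 0`, `v_ε ∈ C²((0,∞))`, `v_ε' ≥ 0` on `(0,∞)`,
`A x^γ v_ε'(x) + (ε²/2) v_ε''(x) = 1` on `(0,∞)`, and consequently
`a x^γ v_ε'(x) + (ε²/2) v_ε''(x) ≥ 1` for every `a ≥ A` and `x > 0`. -/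
theorem stmt7 (A γ ε : ℝ) (hA : 0 < A) (hγ : γ ∈ Set.Ioo (0:ℝ) 1) (hε : 0 < ε)
    (v : ℝ → ℝ)
    (hv : ∀ x : ℝ, v x = ∫ y in (0:ℝ)..|x|, Real.exp (-2*A*y^(γ+1)/((γ+1)*ε^2)) *
        ∫ z in (0:ℝ)..y, (2/ε^2) * Real.exp (2*A*z^(γ+1)/((γ+1)*ε^2))) :
    v 0 = 0 ∧ ContDiffOn ℝ 2 v (Set.Ioi 0) ∧
      (∀ x > (0:ℝ), 0 ≤ deriv v x) ∧
      (∀ x > (0:ℝ), A * x^γ * deriv v x + ε^2/2 * deriv (deriv v) x = 1) ∧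
      (∀ a ≥ A, ∀ x > (0:ℝ), 1 ≤ a * x^γ * deriv v x + ε^2/2 * deriv (deriv v) x) := by
  obtain ⟨hγ0, hγ1⟩ := hγ
  have hε2 : (0:ℝ) < ε^2 := by positivity
  set h : ℝ → ℝ := fun z => (2/ε^2) * Real.exp (2*A*z^(γ+1)/((γ+1)*ε^2)) with hh
  set I : ℝ → ℝ := fun y => ∫ z in (0:ℝ)..y, h z with hI
  set g : ℝ → ℝ := fun y => Real.exp (-2*A*y^(γ+1)/((γ+1)*ε^2)) * I y with hg
  set F : ℝ → ℝ := fun x => ∫ y in (0:ℝ)..x, g y with hF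
  -- continuity of basic pieces
  have hpow : Continuous (fun y : ℝ => y^(γ+1)) :=
    Real.continuous_rpow_const (by linarith)
  have hhcont : Continuous h := by
    apply Continuous.mul continuous_const
    exact Real.continuous_exp.comp (by fun_prop)
  have hIderiv : ∀ y : ℝ, HasDerivAt I (h y) y := fun y => ftc hhcont 0 y
  have hIcont : Continuous I := by
    rw [continuous_iff_continuousAt]
    exact fun y => (hIderiv y).continuousAt
  have hgcont : Continuous g := by
    apply Continuous.mul _ hIcont
    exact Real.continuous_exp.comp (by fun_prop)
  have hFderiv : ∀ x : ℝ, HasDerivAt F (g x) x := fun x => ftc hgcont 0 x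
  -- v agrees with F near any x > 0
  have hvF : Set.EqOn v F (Set.Ioi 0) := by
    intro y hy
    rw [hv y, abs_of_pos hy]
  have hvFev : ∀ x : ℝ, 0 < x → v =ᶠ[nhds x] F := fun x hx =>
    Filter.eventuallyEq_of_mem (Ioi_mem_nhds hx) hvF
  have hdv : ∀ x : ℝ, 0 < x → deriv v x = g x := by
    intro x hx
    rw [(hvFev x hx).deriv_eq, (hFderiv x).deriv]
  -- derivative of g on (0, ∞)
  have hgderiv : ∀ x : ℝ, 0 < x →
      HasDerivAt g (2/ε^2 - (2*A/ε^2) * x^γ * g x) x := by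
    intro x hx
    have hp : HasDerivAt (fun y : ℝ => y^(γ+1)) ((γ+1) * x^γ) x := by
      have := Real.hasDerivAt_rpow_const (x := x) (p := γ+1) (Or.inl hx.ne')
      simpa using this
    have he : HasDerivAt (fun y : ℝ => Real.exp (-2*A*y^(γ+1)/((γ+1)*ε^2)))
        (Real.exp (-2*A*x^(γ+1)/((γ+1)*ε^2)) * (-2*A*((γ+1)*x^γ)/((γ+1)*ε^2))) x := by
      have harg : HasDerivAt (fun y : ℝ => -2*A*y^(γ+1)/((γ+1)*ε^2))
          (-2*A*((γ+1)*x^γ)/((γ+1)*ε^2)) x :=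
        (hp.const_mul (-2*A)).div_const ((γ+1)*ε^2)
      exact (Real.hasDerivAt_exp _).comp x harg
    have hprod := he.mul (hIderiv x)
    have key : Real.exp (-2*A*x^(γ+1)/((γ+1)*ε^2)) * h x = 2/ε^2 := by
      show Real.exp (-2*A*x^(γ+1)/((γ+1)*ε^2)) *
          ((2/ε^2) * Real.exp (2*A*x^(γ+1)/((γ+1)*ε^2))) = 2/ε^2
      rw [show Real.exp (-2*A*x^(γ+1)/((γ+1)*ε^2)) *
            ((2/ε^2) * Real.exp (2*A*x^(γ+1)/((γ+1)*ε^2)))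
          = (2/ε^2) * (Real.exp (-2*A*x^(γ+1)/((γ+1)*ε^2)) *
            Real.exp (2*A*x^(γ+1)/((γ+1)*ε^2))) from by ring,
        ← Real.exp_add,
        show -2*A*x^(γ+1)/((γ+1)*ε^2) + 2*A*x^(γ+1)/((γ+1)*ε^2) = 0 from by ring,
        Real.exp_zero, mul_one]
    have hγ1ne : (γ:ℝ)+1 ≠ 0 := by linarith
    refine hprod.congr_deriv ?_
    rw [key.symm, hg]
    field_simp
    ring
  have hdv2 : ∀ x : ℝ, 0 < x →
      deriv (deriv v) x = 2/ε^2 - (2*A/ε^2) * x^γ * g x := by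
    intro x hx
    have hev : deriv v =ᶠ[nhds x] g :=
      Filter.eventuallyEq_of_mem (Ioi_mem_nhds hx) (fun y hy => hdv y hy)
    rw [hev.deriv_eq, (hgderiv x hx).deriv]
  have hgnn : ∀ x : ℝ, 0 < x → 0 ≤ g x := by
    intro x hx
    apply mul_nonneg (Real.exp_pos _).le
    apply intervalIntegral.integral_nonneg hx.le
    intro z _
    positivity
  -- the main identity
  have hmain : ∀ x > (0:ℝ), A * x^γ * deriv v x + ε^2/2 * deriv (deriv v) x = 1 := by
    intro x hx
    rw [hdv x hx, hdv2 x hx]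
    field_simp
    ring
  refine ⟨?_, ?_, ?_, hmain, ?_⟩
  · rw [hv 0]; simp
  · -- ContDiffOn
    have hopen : IsOpen (Set.Ioi (0:ℝ)) := isOpen_Ioi
    have hgderiv' : Set.EqOn (deriv g) (fun x => 2/ε^2 - (2*A/ε^2) * x^γ * g x)
        (Set.Ioi 0) := fun x hx => (hgderiv x hx).deriv
    have hg1 : ContDiffOn ℝ 1 g (Set.Ioi 0) := by
      rw [show (1:WithTop ℕ∞) = 0 + 1 from rfl, contDiffOn_succ_iff_deriv_of_isOpen hopen]
      refine ⟨fun x hx => ((hgderiv x hx).differentiableAt).differentiableWithinAt,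
        by simp, ?_⟩
      rw [contDiffOn_zero]
      apply ContinuousOn.congr _ hgderiv'
      apply ContinuousOn.sub continuousOn_const
      apply ContinuousOn.mul (ContinuousOn.mul continuousOn_const ?_) hgcont.continuousOn
      exact (Real.continuous_rpow_const hγ0.le).continuousOn
    have hF2 : ContDiffOn ℝ 2 F (Set.Ioi 0) := by
      rw [show (2:WithTop ℕ∞) = 1 + 1 from rfl, contDiffOn_succ_iff_deriv_of_isOpen hopen]
      refine ⟨fun x hx => (hFderiv x).differentiableAt.differentiableWithinAt, by simp, ?_⟩
      have : deriv F = g := funext fun x => (hFderiv x).deriv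
      rw [this]
      exact hg1
    exact hF2.congr hvF
  · intro x hx
    rw [hdv x hx]
    exact hgnn x hx
  · intro a ha x hx
    have h1 := hmain x hx
    have h2 : A * x^γ * deriv v x ≤ a * x^γ * deriv v x := by
      apply mul_le_mul_of_nonneg_right _ (by rw [hdv x hx]; exact hgnn x hx)
      apply mul_le_mul_of_nonneg_right ha (Real.rpow_nonneg hx.le γ)
    linarith
end

section
/- Let γ ∈ (0,1), δ > 0, and let a₊, a₋, b₊, b₋ be positive reals. Define N_ε = ∫₀^δ exp(−2 a₋ z^{γ+1} / ((γ+1) ε² b₋)) dz and D_ε = ∫₀^δ exp(−2 a₊ z^{γ+1} / ((γ+1) ε² b₊)) dz. Then lim_{ε→0⁺} N_ε / (N_ε + D_ε) = (a₊/b₊)^{1/(γ+1)} / ((a₋/b₋)^{1/(γ+1)} + (a₊/b₊)^{1/(γ+1)}). -/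
open MeasureTheory Filter Real Set

private lemma myIntegrable (p : ℝ) (hp : 1 ≤ p) :
    IntegrableOn (fun u : ℝ => Real.exp (-u ^ p)) (Set.Ioi 0) := by
  have h := integrableOn_rpow_mul_exp_neg_rpow (s := 0) (p := p) (by norm_num) (by linarith)
  refine h.congr_fun (fun x hx => ?_) measurableSet_Ioi
  simp [Real.rpow_zero]

private lemma myIntegralPos (p : ℝ) (hp : 1 ≤ p) :
    0 < ∫ u in Set.Ioi (0:ℝ), Real.exp (-u ^ p) := by
  rw [setIntegral_pos_iff_support_of_nonneg_ae]
  · have : Function.support (fun u : ℝ => Real.exp (-u ^ p)) = Set.univ := by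
      ext x; simp [Function.support, (Real.exp_pos _).ne']
    rw [this, Set.univ_inter]
    simp [Real.volume_Ioi]
  · filter_upwards with x using (Real.exp_pos _).le
  · exact myIntegrable p hp

/-- Key Laplace asymptotic. -/
private lemma keyLim (p δ : ℝ) (hp : 1 < p) (hδ : 0 < δ) (a b : ℝ) (ha : 0 < a) (hb : 0 < b) :
    Tendsto (fun ε : ℝ =>
        (∫ z in (0:ℝ)..δ, Real.exp (-2*a*z^p/(p*ε^2*b))) / ε ^ (2/p))
      (nhdsWithin 0 (Set.Ioi 0))
      (nhds ((p*b/(2*a)) ^ (1/p) * ∫ u in Set.Ioi (0:ℝ), Real.exp (-u ^ p))) := by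
  have hp0 : 0 < p := lt_trans one_pos hp
  have hC0 : 0 < 2*a/(p*b) := by positivity
  set C : ℝ := (2*a/(p*b)) ^ (1/p) with hC
  have hCpos : 0 < C := Real.rpow_pos_of_pos hC0 _
  set I : ℝ := ∫ u in Set.Ioi (0:ℝ), Real.exp (-u ^ p) with hI
  -- k ε = C * ε^(-(2/p))
  have hk : ∀ ε : ℝ, 0 < ε →
      (∫ z in (0:ℝ)..δ, Real.exp (-2*a*z^p/(p*ε^2*b))) / ε ^ (2/p)
        = C⁻¹ * ∫ u in (0:ℝ)..(C * ε ^ (-(2/p)) * δ), Real.exp (-u ^ p) := by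
    intro ε hε
    set k : ℝ := C * ε ^ (-(2/p)) with hkdef
    have hkpos : 0 < k := mul_pos hCpos (Real.rpow_pos_of_pos hε _)
    have hkp : k ^ p = 2*a/(p*ε^2*b) := by
      rw [hkdef, Real.mul_rpow hCpos.le (Real.rpow_pos_of_pos hε _).le, hC,
        ← Real.rpow_natCast ε 2, ← Real.rpow_mul hC0.le, ← Real.rpow_mul hε.le,
        one_div, inv_mul_cancel₀ (ne_of_gt hp0), Real.rpow_one]
      rw [neg_mul, div_mul_cancel₀ _ (ne_of_gt hp0), Real.rpow_neg hε.le]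
      push_cast
      field_simp
    have heq : (∫ z in (0:ℝ)..δ, Real.exp (-2*a*z^p/(p*ε^2*b)))
        = ∫ z in (0:ℝ)..δ, Real.exp (-(k*z) ^ p) := by
      apply intervalIntegral.integral_congr
      intro z hz
      rw [Set.uIcc_of_le hδ.le] at hz
      have hz0 : 0 ≤ z := hz.1
      show Real.exp (-2*a*z^p/(p*ε^2*b)) = Real.exp (-(k*z) ^ p)
      rw [Real.mul_rpow hkpos.le hz0, hkp]
      congr 1
      field_simp
    have hcv := intervalIntegral.integral_comp_mul_left
      (f := fun u : ℝ => Real.exp (-u ^ p)) (a := (0:ℝ)) (b := δ) (ne_of_gt hkpos)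
    rw [mul_zero, smul_eq_mul] at hcv
    rw [heq, hcv]
    have hkC : k * ε ^ (2/p) = C := by
      rw [hkdef, Real.rpow_neg hε.le, mul_assoc,
        inv_mul_cancel₀ (by positivity : (ε:ℝ) ^ (2/p) ≠ 0), mul_one]
    rw [← hkC, mul_inv]
    ring
  -- limit of the rescaled upper bound
  have hT : Tendsto (fun ε : ℝ => C * ε ^ (-(2/p)) * δ) (nhdsWithin 0 (Set.Ioi 0)) atTop := by
    have h1 : Tendsto (fun ε : ℝ => ε ^ (2/p)) (nhdsWithin 0 (Set.Ioi 0))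
        (nhdsWithin 0 (Set.Ioi 0)) := by
      rw [tendsto_nhdsWithin_iff]
      constructor
      · have := (Real.continuousAt_rpow_const 0 (2/p) (Or.inr (by positivity))).tendsto
        rw [Real.zero_rpow (by positivity : (2:ℝ)/p ≠ 0)] at this
        exact this.mono_left nhdsWithin_le_nhds
      · filter_upwards [self_mem_nhdsWithin] with x hx
        exact Real.rpow_pos_of_pos hx _
    have h2 : Tendsto (fun ε : ℝ => ε ^ (-(2/p))) (nhdsWithin 0 (Set.Ioi 0)) atTop := by
      refine (tendsto_inv_nhdsGT_zero.comp h1).congr' ?_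
      filter_upwards [self_mem_nhdsWithin] with x hx
      simp only [Function.comp_apply]
      rw [Real.rpow_neg (le_of_lt hx)]
    have h3 := (tendsto_const_mul_atTop_of_pos hCpos).mpr h2
    exact (tendsto_mul_const_atTop_of_pos hδ).mpr h3
  have hF : Tendsto (fun ε : ℝ => ∫ u in (0:ℝ)..(C * ε ^ (-(2/p)) * δ), Real.exp (-u ^ p))
      (nhdsWithin 0 (Set.Ioi 0)) (nhds I) :=
    intervalIntegral_tendsto_integral_Ioi 0 (myIntegrable p hp.le) hT
  have hmul : Tendsto (fun ε : ℝ =>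
      C⁻¹ * ∫ u in (0:ℝ)..(C * ε ^ (-(2/p)) * δ), Real.exp (-u ^ p))
      (nhdsWithin 0 (Set.Ioi 0)) (nhds (C⁻¹ * I)) := hF.const_mul _
  have hCinv : C⁻¹ = (p*b/(2*a)) ^ (1/p) := by
    rw [hC, ← Real.inv_rpow hC0.le]
    congr 1
    field_simp
  rw [← hCinv]
  refine hmul.congr' ?_
  filter_upwards [self_mem_nhdsWithin] with ε hε
  exact (hk ε hε).symm

/-- Limit identifying the selection probability `p₊`: with
`N_ε = ∫₀^δ exp(-2a₋ z^{γ+1}/((γ+1)ε²b₋)) dz` and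
`D_ε = ∫₀^δ exp(-2a₊ z^{γ+1}/((γ+1)ε²b₊)) dz`, one has
`N_ε/(N_ε + D_ε) → (a₊/b₊)^{1/(γ+1)} / ((a₋/b₋)^{1/(γ+1)} + (a₊/b₊)^{1/(γ+1)})`
as `ε → 0⁺`. -/
theorem stmt9 (γ δ : ℝ) (hγ : γ ∈ Set.Ioo (0:ℝ) 1) (hδ : 0 < δ)
    (ap am bp bm : ℝ) (hap : 0 < ap) (ham : 0 < am) (hbp : 0 < bp) (hbm : 0 < bm) :
    Tendsto (fun ε : ℝ =>
      (∫ z in (0:ℝ)..δ, Real.exp (-2*am*z^(γ+1)/((γ+1)*ε^2*bm))) /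
      ((∫ z in (0:ℝ)..δ, Real.exp (-2*am*z^(γ+1)/((γ+1)*ε^2*bm))) +
       (∫ z in (0:ℝ)..δ, Real.exp (-2*ap*z^(γ+1)/((γ+1)*ε^2*bp)))))
      (nhdsWithin 0 (Set.Ioi 0))
      (nhds ((ap/bp) ^ (1/(γ+1)) / ((am/bm) ^ (1/(γ+1)) + (ap/bp) ^ (1/(γ+1))))) := by
  obtain ⟨hγ0, hγ1⟩ := hγ
  have hp : (1:ℝ) < γ + 1 := by linarith
  have hp0 : (0:ℝ) < γ + 1 := by linarith
  set p : ℝ := γ + 1 with hpdef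
  set I : ℝ := ∫ u in Set.Ioi (0:ℝ), Real.exp (-u ^ p) with hI
  have hIpos : 0 < I := myIntegralPos p hp.le
  set Lm : ℝ := (p*bm/(2*am)) ^ (1/p) * I with hLm
  set Lp : ℝ := (p*bp/(2*ap)) ^ (1/p) * I with hLp
  have hLmpos : 0 < Lm := mul_pos (Real.rpow_pos_of_pos (by positivity) _) hIpos
  have hLppos : 0 < Lp := mul_pos (Real.rpow_pos_of_pos (by positivity) _) hIpos
  have hm := keyLim p δ hp hδ am bm ham hbm
  have hpp := keyLim p δ hp hδ ap bp hap hbp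
  have hdiv : Tendsto (fun ε : ℝ =>
      ((∫ z in (0:ℝ)..δ, Real.exp (-2*am*z^p/(p*ε^2*bm))) / ε ^ (2/p)) /
      (((∫ z in (0:ℝ)..δ, Real.exp (-2*am*z^p/(p*ε^2*bm))) / ε ^ (2/p)) +
       ((∫ z in (0:ℝ)..δ, Real.exp (-2*ap*z^p/(p*ε^2*bp))) / ε ^ (2/p))))
      (nhdsWithin 0 (Set.Ioi 0)) (nhds (Lm / (Lm + Lp))) :=
    hm.div (hm.add hpp) (by positivity)
  have hfinal : Lm / (Lm + Lp)
      = (ap/bp) ^ (1/p) / ((am/bm) ^ (1/p) + (ap/bp) ^ (1/p)) := by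
    have hfac : ∀ a b : ℝ, 0 < a → 0 < b →
        (p*b/(2*a)) ^ (1/p) = ((p/2) ^ (1/p)) * ((a/b) ^ (1/p))⁻¹ := by
      intro a b ha hb
      rw [← Real.inv_rpow (by positivity), ← Real.mul_rpow (by positivity) (by positivity)]
      congr 1
      field_simp
    rw [hLm, hLp, hfac am bm ham hbm, hfac ap bp hap hbp]
    set K : ℝ := (p/2) ^ (1/p) with hK
    have hKpos : 0 < K := Real.rpow_pos_of_pos (by positivity) _
    set x : ℝ := (am/bm) ^ (1/p) with hx
    set y : ℝ := (ap/bp) ^ (1/p) with hy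
    have hxpos : 0 < x := Real.rpow_pos_of_pos (by positivity) _
    have hypos : 0 < y := Real.rpow_pos_of_pos (by positivity) _
    rw [div_eq_div_iff (by positivity) (by positivity)]
    field_simp
    ring
  rw [← hfinal]
  refine hdiv.congr' ?_
  filter_upwards [self_mem_nhdsWithin] with ε hε
  have hεp : (0:ℝ) < ε ^ (2/p) := Real.rpow_pos_of_pos hε _
  rw [← add_div, div_div_div_cancel_right₀ (ne_of_gt hεp)]
end

section
/- Let γ ∈ (0,1), ε > 0, and let a₊, a₋, b₊, b₋ be positive reals. Define s_ε : ℝ → ℝ by s_ε(y) = ∫₀^y exp(−2 a₊ z^{γ+1} / ((γ+1) ε² b₊)) dz for y ≥ 0 and s_ε(y) = −∫₀^{|y|} exp(−2 a₋ z^{γ+1} / ((γ+1) ε² b₋)) dz for y < 0. Then s_ε is continuously differentiable on ℝ, twice continuously differentiable on ℝ∖{0}, and for any functions φ, β : ℝ → ℝ satisfying 0 < φ(y) ≤ a₊ and β(y)² ≥ b₊ for all y > 0, and φ(y) ≥ a₋ and 0 < β(y)² ≤ b₋ for all y < 0, one has φ(y) y^γ s_ε′(y) + (ε²/2) β(y)²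 s_ε″(y) ≤ 0 for all y ≠ 0, where y^γ := |y|^γ for y > 0 and y^γ := −|y|^γ for y < 0. -/
open MeasureTheory

/-- Supersolution property of the scale-type function `s_ε` for the operator
`φ(y) y^γ (d/dy) + (ε²/2) β(y)² (d²/dy²)`, with the convention
`y^γ = |y|^γ` for `y > 0` and `y^γ = -|y|^γ` for `y < 0`. -/
theorem stmt10 (γ ε : ℝ) (hγ : γ ∈ Set.Ioo (0:ℝ) 1) (hε : 0 < ε)
    (ap am bp bm : ℝ) (hap : 0 < ap) (ham : 0 < am) (hbp : 0 < bp) (hbm : 0 < bm)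
    (s : ℝ → ℝ)
    (hs : ∀ y : ℝ, s y =
      if 0 ≤ y then ∫ z in (0:ℝ)..y, Real.exp (-2*ap*z^(γ+1)/((γ+1)*ε^2*bp))
      else -∫ z in (0:ℝ)..|y|, Real.exp (-2*am*z^(γ+1)/((γ+1)*ε^2*bm))) :
    ContDiff ℝ 1 s ∧ ContDiffOn ℝ 2 s {y : ℝ | y ≠ 0} ∧
      ∀ φ β : ℝ → ℝ,
        (∀ y > (0:ℝ), 0 < φ y ∧ φ y ≤ ap ∧ bp ≤ (β y)^2) →
        (∀ y < (0:ℝ), am ≤ φ y ∧ 0 < (β y)^2 ∧ (β y)^2 ≤ bm) →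
        ∀ y : ℝ, y ≠ 0 →
          φ y * (if 0 < y then |y| ^ γ else -(|y| ^ γ)) * deriv s y +
            ε^2/2 * (β y)^2 * deriv (deriv s) y ≤ 0 := by
  obtain ⟨hγ0, hγ1⟩ := hγ
  have hp : (0:ℝ) < γ + 1 := by linarith
  have hε2 : (0:ℝ) < ε ^ 2 := by positivity
  set gp : ℝ → ℝ := fun z => Real.exp (-2*ap*z^(γ+1)/((γ+1)*ε^2*bp)) with hgp_def
  set gm : ℝ → ℝ := fun z => Real.exp (-2*am*z^(γ+1)/((γ+1)*ε^2*bm)) with hgm_def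
  have hrpc : Continuous fun z : ℝ => z ^ (γ+1) := Real.continuous_rpow_const hp.le
  have hgpc : Continuous gp := Real.continuous_exp.comp ((continuous_const.mul hrpc).div_const _)
  have hgmc : Continuous gm := Real.continuous_exp.comp ((continuous_const.mul hrpc).div_const _)
  set Fp : ℝ → ℝ := fun y => ∫ z in (0:ℝ)..y, gp z with hFp_def
  set Fm : ℝ → ℝ := fun y => ∫ z in (0:ℝ)..y, gm z with hFm_def
  have hFp : ∀ y, HasDerivAt Fp (gp y) y := fun y =>
    intervalIntegral.integral_hasDerivAt_right (hgpc.intervalIntegrable _ _)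
      (hgpc.stronglyMeasurableAtFilter _ _) hgpc.continuousAt
  have hFm : ∀ y, HasDerivAt Fm (gm y) y := fun y =>
    intervalIntegral.integral_hasDerivAt_right (hgmc.intervalIntegrable _ _)
      (hgmc.stronglyMeasurableAtFilter _ _) hgmc.continuousAt
  have hgp0 : gp 0 = 1 := by
    simp [hgp_def, Real.zero_rpow hp.ne']
  have hgm0 : gm 0 = 1 := by
    simp [hgm_def, Real.zero_rpow hp.ne']
  -- the function x ↦ -(Fm (-x))
  have hGm : ∀ y : ℝ, HasDerivAt (fun x => -(Fm (-x))) (gm (-y)) y := by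
    intro y
    have h := (((hFm (-y)).comp y (hasDerivAt_neg y)).neg)
    rw [mul_neg_one, neg_neg] at h
    exact h
  set sd : ℝ → ℝ := fun y => if 0 ≤ y then gp y else gm (-y) with hsd_def
  have hs_pos : ∀ ⦃y : ℝ⦄, 0 ≤ y → s y = Fp y := fun y hy => by rw [hs y, if_pos hy]
  have hs_neg : ∀ ⦃y : ℝ⦄, y ≤ 0 → s y = -(Fm (-y)) := by
    intro y hy
    rcases eq_or_lt_of_le hy with h | h
    · rw [h] at *
      rw [hs 0, if_pos le_rfl]
      simp [hFp_def, hFm_def]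
    · rw [hs y, if_neg (not_le.mpr h), abs_of_neg h]
  have hds : ∀ y, HasDerivAt s (sd y) y := by
    intro y
    rcases lt_trichotomy y 0 with hy | hy | hy
    · have h1 : HasDerivAt s (gm (-y)) y := by
        refine (hGm y).congr_of_eventuallyEq ?_
        filter_upwards [Iio_mem_nhds hy] with x hx using hs_neg hx.le
      simpa [hsd_def, not_le.mpr hy] using h1
    · subst hy
      have hR : HasDerivWithinAt s (gp 0) (Set.Ici 0) 0 :=
        ((hFp 0).hasDerivWithinAt).congr (fun x hx => hs_pos hx) (hs_pos le_rfl)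
      have hL : HasDerivWithinAt s (gp 0) (Set.Iic 0) 0 := by
        have h1 := ((hGm 0).hasDerivWithinAt (s := Set.Iic 0)).congr
          (fun x hx => hs_neg hx) (hs_neg le_rfl)
        simpa [hgm0, hgp0] using h1
      have h := hL.union hR
      rw [Set.Iic_union_Ici] at h
      have h2 := hasDerivWithinAt_univ.mp h
      simpa [hsd_def, hgp0] using h2
    · have h1 : HasDerivAt s (gp y) y := by
        refine (hFp y).congr_of_eventuallyEq ?_
        filter_upwards [Ioi_mem_nhds hy] with x hx using hs_pos hx.le
      simpa [hsd_def, hy.le] using h1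
  have hderiv : deriv s = sd := funext fun y => (hds y).deriv
  have hsdc : Continuous sd := by
    refine Continuous.if_le hgpc (hgmc.comp continuous_neg) continuous_const continuous_id ?_
    intro x hx
    rw [← hx]
    simp [hgp0, hgm0]
  have hC1 : ContDiff ℝ 1 s :=
    contDiff_one_iff_deriv.mpr ⟨fun y => (hds y).differentiableAt, hderiv ▸ hsdc⟩
  -- ContDiffAt of gp, gm ∘ neg away from 0
  have hgp_cd : ∀ y : ℝ, y ≠ 0 → ContDiffAt ℝ 1 gp y := by
    intro y hy
    exact (Real.contDiff_exp.contDiffAt).comp y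
      (((contDiffAt_const.mul (Real.contDiffAt_rpow_const_of_ne hy)).div_const _))
  have hgm_cd : ∀ y : ℝ, y ≠ 0 → ContDiffAt ℝ 1 (fun x => gm (-x)) y := by
    intro y hy
    have h1 : ContDiffAt ℝ 1 gm (-y) :=
      (Real.contDiff_exp.contDiffAt).comp (-y)
        (((contDiffAt_const.mul (Real.contDiffAt_rpow_const_of_ne (neg_ne_zero.mpr hy))).div_const _))
    exact h1.comp y (contDiff_neg.contDiffAt)
  have hsd_cd : ∀ y : ℝ, y ≠ 0 → ContDiffAt ℝ 1 sd y := by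
    intro y hy
    rcases lt_or_gt_of_ne hy with h | h
    · refine (hgm_cd y hy).congr_of_eventuallyEq ?_
      filter_upwards [Iio_mem_nhds h] with x hx
      simp [hsd_def, not_le.mpr (Set.mem_Iio.mp hx)]
    · refine (hgp_cd y hy).congr_of_eventuallyEq ?_
      filter_upwards [Ioi_mem_nhds h] with x hx
      simp [hsd_def, le_of_lt (Set.mem_Ioi.mp hx)]
  have hC2 : ContDiffOn ℝ 2 s {y : ℝ | y ≠ 0} := by
    have hopen : IsOpen {y : ℝ | y ≠ 0} := isOpen_ne
    rw [show (2 : WithTop ℕ∞) = 1 + 1 by norm_num, contDiffOn_succ_iff_deriv_of_isOpen hopen]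
    refine ⟨fun y _ => (hds y).differentiableAt.differentiableWithinAt, by simp, ?_⟩
    rw [hderiv]
    exact fun y hy => (hsd_cd y hy).contDiffWithinAt
  refine ⟨hC1, hC2, ?_⟩
  intro φ β hφp hφm y hy
  rcases lt_or_gt_of_ne hy with hyn | hyp
  · -- y < 0
    obtain ⟨hφ, hβ0, hβ⟩ := hφm y hyn
    have hyne : (-y) ≠ 0 := neg_ne_zero.mpr hy
    have h0 : HasDerivAt (fun z : ℝ => z ^ (γ+1)) ((γ+1) * (-y) ^ γ) (-y) := by
      have h := Real.hasDerivAt_rpow_const (x := -y) (p := γ+1) (Or.inl hyne)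
      rwa [show γ + 1 - 1 = γ by ring] at h
    have hexp : HasDerivAt (fun x : ℝ => gm (-x))
        (gm (-y) * (-2*am*((γ+1)*(-y)^γ*(-1))/((γ+1)*ε^2*bm))) y :=
      ((((h0.comp y (hasDerivAt_neg y)).const_mul (-2*am)).div_const _)).exp
    have hsd' : HasDerivAt sd
        (gm (-y) * (-2*am*((γ+1)*(-y)^γ*(-1))/((γ+1)*ε^2*bm))) y := by
      refine hexp.congr_of_eventuallyEq ?_
      filter_upwards [Iio_mem_nhds hyn] with x hx
      simp [hsd_def, not_le.mpr (Set.mem_Iio.mp hx)]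
    have hsdy : sd y = gm (-y) := by simp [hsd_def, not_le.mpr hyn]
    rw [hderiv, hsd'.deriv, hsdy, if_neg (not_lt.mpr hyn.le), abs_of_neg hyn]
    have hE : 0 < gm (-y) := Real.exp_pos _
    have hYγ : 0 < (-y) ^ γ := Real.rpow_pos_of_pos (by linarith) γ
    have hfac : am * (β y)^2 / bm - φ y ≤ 0 := by
      have h1 : am * (β y)^2 / bm ≤ am := by
        rw [div_le_iff₀ hbm]; nlinarith
      linarith
    have heq : φ y * -((-y) ^ γ) * gm (-y) +
        ε^2/2 * (β y)^2 * (gm (-y) * (-2*am*((γ+1)*(-y)^γ*(-1))/((γ+1)*ε^2*bm))) =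
        (gm (-y) * (-y)^γ) * (am * (β y)^2 / bm - φ y) := by
      field_simp
      ring
    rw [heq]
    exact mul_nonpos_iff.mpr (Or.inl ⟨(mul_pos hE hYγ).le, hfac⟩)
  · -- y > 0
    obtain ⟨hφ0, hφ, hβ⟩ := hφp y hyp
    have h0 : HasDerivAt (fun z : ℝ => z ^ (γ+1)) ((γ+1) * y ^ γ) y := by
      have h := Real.hasDerivAt_rpow_const (x := y) (p := γ+1) (Or.inl hy)
      rwa [show γ + 1 - 1 = γ by ring] at h
    have hexp : HasDerivAt gp
        (gp y * (-2*ap*((γ+1)*y^γ)/((γ+1)*ε^2*bp))) y :=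
      (((h0.const_mul (-2*ap)).div_const _)).exp
    have hsd' : HasDerivAt sd
        (gp y * (-2*ap*((γ+1)*y^γ)/((γ+1)*ε^2*bp))) y := by
      refine hexp.congr_of_eventuallyEq ?_
      filter_upwards [Ioi_mem_nhds hyp] with x hx
      simp [hsd_def, le_of_lt (Set.mem_Ioi.mp hx)]
    have hsdy : sd y = gp y := by simp [hsd_def, hyp.le]
    rw [hderiv, hsd'.deriv, hsdy, if_pos hyp, abs_of_pos hyp]
    have hE : 0 < gp y := Real.exp_pos _
    have hYγ : 0 < y ^ γ := Real.rpow_pos_of_pos hyp γ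
    have hfac : φ y - ap * (β y)^2 / bp ≤ 0 := by
      have h1 : ap ≤ ap * (β y)^2 / bp := by
        rw [le_div_iff₀ hbp]; nlinarith
      linarith
    have heq : φ y * y ^ γ * gp y +
        ε^2/2 * (β y)^2 * (gp y * (-2*ap*((γ+1)*y^γ)/((γ+1)*ε^2*bp))) =
        (gp y * y^γ) * (φ y - ap * (β y)^2 / bp) := by
      field_simp
      ring
    rw [heq]
    exact mul_nonpos_iff.mpr (Or.inl ⟨(mul_pos hE hYγ).le, hfac⟩)
end

section
/- Let (E, ℰ), (F, ℱ), (G, 𝒢) be measurable spaces, let P be a Markov (probability) kernel from E to F and Q a Markov kernel from F to G, and define the composition (QP)(y, A) = ∫_F Q(z, A) P(y, dz). For probability measures λ₁, λ₂ define ‖λ₁ − λ₂‖_TV = sup_A (λ₁(A) − λ₂(A)), the supremum over measurable sets. Suppose there are K ∈ ℱ, ρ ∈ (0,1], δ ∈ [0,1] and points y₁, y₂ ∈ E such that ‖Q(z₁, ·) − Q(z₂, ·)‖_TV ≤ 1 − ρ for all z₁, z₂ ∈ K, and P(y_i, K) ≥ δ for i = 1, 2. Then ‖(QP)(y₁, ·)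 − (QP)(y₂, ·)‖_TV ≤ 1 − ρ δ². -/
open MeasureTheory ProbabilityTheory

/-- Total variation distance `sup_A (λ₁(A) − λ₂(A))` between two (probability) measures,
the supremum being taken over measurable sets. -/
noncomputable def tvDist {Ω : Type*} [MeasurableSpace Ω] (l₁ l₂ : Measure Ω) : ℝ :=
  ⨆ A : {s : Set Ω // MeasurableSet s}, ((l₁ A.1).toReal - (l₂ A.1).toReal)

lemma toReal_prob_le_one {Ω : Type*} [MeasurableSpace Ω] (μ : Measure Ω)
    [IsProbabilityMeasure μ] (A : Set Ω) : (μ A).toReal ≤ 1 := by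
  have h1 : (μ A).toReal ≤ (1 : ENNReal).toReal :=
    ENNReal.toReal_mono ENNReal.one_ne_top (prob_le_one)
  simpa using h1

lemma le_tvDist {Ω : Type*} [MeasurableSpace Ω] (l₁ l₂ : Measure Ω)
    [IsProbabilityMeasure l₁] {A : Set Ω} (hA : MeasurableSet A) :
    (l₁ A).toReal - (l₂ A).toReal ≤ tvDist l₁ l₂ := by
  have hbdd : BddAbove (Set.range fun A : {s : Set Ω // MeasurableSet s} =>
      ((l₁ A.1).toReal - (l₂ A.1).toReal)) := by
    refine ⟨1, ?_⟩
    rintro x ⟨⟨s, hs⟩, rfl⟩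
    have h1 : (l₁ s).toReal ≤ 1 := toReal_prob_le_one l₁ s
    have h2 : (0:ℝ) ≤ (l₂ s).toReal := ENNReal.toReal_nonneg
    simp only
    linarith
  exact le_ciSup hbdd (⟨A, hA⟩ : {s : Set Ω // MeasurableSet s})

/-- Propagation of a local Dobrushin condition through an extra transition step:
if `‖Q(z₁,·) − Q(z₂,·)‖_TV ≤ 1 − ρ` for all `z₁, z₂ ∈ K` and `P(yᵢ, K) ≥ δ`,
then `‖(QP)(y₁,·) − (QP)(y₂,·)‖_TV ≤ 1 − ρδ²`, where `(QP)(y,A) = ∫ Q(z,A) P(y,dz)`. -/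
theorem stmt12 {E F G : Type*} [MeasurableSpace E] [MeasurableSpace F] [MeasurableSpace G]
    (P : Kernel E F) (Q : Kernel F G) [IsMarkovKernel P] [IsMarkovKernel Q]
    (K : Set F) (hK : MeasurableSet K) (ρ δ : ℝ)
    (hρ : ρ ∈ Set.Ioc (0:ℝ) 1) (hδ : δ ∈ Set.Icc (0:ℝ) 1) (y₁ y₂ : E)
    (hQ : ∀ z₁ ∈ K, ∀ z₂ ∈ K, tvDist (Q z₁) (Q z₂) ≤ 1 - ρ)
    (hP₁ : δ ≤ (P y₁ K).toReal) (hP₂ : δ ≤ (P y₂ K).toReal) :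
    tvDist ((Q ∘ₖ P) y₁) ((Q ∘ₖ P) y₂) ≤ 1 - ρ * δ^2 := by
  have : Nonempty {s : Set G // MeasurableSet s} := ⟨⟨∅, MeasurableSet.empty⟩⟩
  refine ciSup_le fun A => ?_
  obtain ⟨A, hA⟩ := A
  simp only
  rcases eq_or_lt_of_le hδ.1 with hδ0 | hδpos
  · -- δ = 0 : trivial bound by 1
    have h1 : (((Q ∘ₖ P) y₁) A).toReal ≤ 1 := toReal_prob_le_one _ A
    have h2 : (0:ℝ) ≤ (((Q ∘ₖ P) y₂) A).toReal := ENNReal.toReal_nonneg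
    rw [← hδ0]
    ring_nf
    linarith
  · -- δ > 0, so K is nonempty
    set f : F → ℝ := fun z => (Q z A).toReal with hf
    have hfm : Measurable f := (Q.measurable_coe hA).ennreal_toReal
    have hf01 : ∀ z, 0 ≤ f z ∧ f z ≤ 1 := fun z =>
      ⟨ENNReal.toReal_nonneg, toReal_prob_le_one (Q z) A⟩
    -- rewrite comp as integral
    have hrw : ∀ y : E, (((Q ∘ₖ P) y) A).toReal = ∫ z, f z ∂(P y) := by
      intro y
      rw [Kernel.comp_apply' _ _ _ hA,
        ← integral_toReal ((Q.measurable_coe hA).aemeasurable)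
          (ae_of_all _ fun z => measure_lt_top (Q z) A)]
    have hfint : ∀ y : E, Integrable f (P y) := by
      intro y
      refine Integrable.mono' (integrable_const 1) hfm.aestronglyMeasurable ?_
      filter_upwards with z
      rw [Real.norm_eq_abs, abs_of_nonneg (hf01 z).1]
      exact (hf01 z).2
    -- K is nonempty
    have hKne : K.Nonempty := by
      refine nonempty_of_measure_ne_zero (μ := P y₁) ?_
      intro h0
      rw [h0] at hP₁
      simp at hP₁
      linarith
    have hIne : (f '' K).Nonempty := hKne.image f
    have hbddA : BddAbove (f '' K) := ⟨1, by rintro x ⟨z, _, rfl⟩; exact (hf01 z).2⟩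
    have hbddB : BddBelow (f '' K) := ⟨0, by rintro x ⟨z, _, rfl⟩; exact (hf01 z).1⟩
    set s := sSup (f '' K) with hs
    set i := sInf (f '' K) with hi
    have hs1 : s ≤ 1 := csSup_le hIne (by rintro x ⟨z, _, rfl⟩; exact (hf01 z).2)
    have hi0 : 0 ≤ i := le_csInf hIne (by rintro x ⟨z, _, rfl⟩; exact (hf01 z).1)
    have hgap : s ≤ i + (1 - ρ) := by
      refine csSup_le hIne ?_
      rintro x ⟨z₁, hz₁, rfl⟩
      have : f z₁ - (1 - ρ) ≤ i := by
        refine le_csInf hIne ?_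
        rintro x ⟨z₂, hz₂, rfl⟩
        have h1 : (Q z₁ A).toReal - (Q z₂ A).toReal ≤ tvDist (Q z₁) (Q z₂) :=
          le_tvDist (Q z₁) (Q z₂) hA
        have h2 := hQ z₁ hz₁ z₂ hz₂
        simp only [hf]
        linarith
      linarith
    -- integral bounds
    have hp1 : (P y₁ K).toReal ≤ 1 := toReal_prob_le_one _ K
    have hbound1 : ∫ z, f z ∂(P y₁) ≤ s * (P y₁ K).toReal + (1 - (P y₁ K).toReal) := by
      rw [← integral_add_compl hK (hfint y₁)]
      have hK1 : ∫ z in K, f z ∂(P y₁) ≤ s * (P y₁ K).toReal := by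
        have := setIntegral_mono_on (hfint y₁).integrableOn
          (integrableOn_const (measure_ne_top _ _)) hK
          (fun z hz => le_csSup hbddA ⟨z, hz, rfl⟩)
        rwa [setIntegral_const, smul_eq_mul, mul_comm] at this
      have hK2 : ∫ z in Kᶜ, f z ∂(P y₁) ≤ 1 - (P y₁ K).toReal := by
        have h := setIntegral_mono_on (hfint y₁).integrableOn
          (integrableOn_const (measure_ne_top _ _)) hK.compl
          (fun z _ => (hf01 z).2)
        rw [setIntegral_const, smul_eq_mul, mul_one, measureReal_def] at h
        have hc : (P y₁ Kᶜ).toReal = 1 - (P y₁ K).toReal := by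
          rw [measure_compl hK (measure_ne_top _ _), measure_univ,
            ENNReal.toReal_sub_of_le prob_le_one ENNReal.one_ne_top, ENNReal.toReal_one]
        linarith [h, hc.le, hc.ge]
      linarith
    have hbound2 : i * (P y₂ K).toReal ≤ ∫ z, f z ∂(P y₂) := by
      rw [← integral_add_compl hK (hfint y₂)]
      have hK1 : i * (P y₂ K).toReal ≤ ∫ z in K, f z ∂(P y₂) := by
        have := setIntegral_mono_on
          (integrableOn_const (measure_ne_top _ _))
          (hfint y₂).integrableOn hK
          (fun z hz => csInf_le hbddB ⟨z, hz, rfl⟩)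
        rwa [setIntegral_const, smul_eq_mul, mul_comm] at this
      have hK2 : 0 ≤ ∫ z in Kᶜ, f z ∂(P y₂) :=
        setIntegral_nonneg hK.compl (fun z _ => (hf01 z).1)
      linarith
    rw [hrw y₁, hrw y₂]
    have hρ1 := hρ.1
    have hρ2 := hρ.2
    have hδ1 := hδ.2
    nlinarith [mul_nonneg (sub_nonneg.mpr hs1) (sub_nonneg.mpr hP₁),
      mul_nonneg hi0 hδpos.le, mul_le_mul_of_nonneg_left hP₁ (sub_nonneg.mpr hs1),
      mul_le_mul_of_nonneg_left hP₂ hi0,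
      mul_le_mul_of_nonneg_right hδ1 (mul_pos hρ.1 hδpos).le]
end

section
/- Let γ ∈ (0,1) and 0 < c₁ ≤ c₂ < ∞. Let X : [0,∞) → ℝ^d be continuous, let φ : ℝ^d × ℝ → ℝ be continuous with c₁ ≤ φ(x,y) ≤ c₂ for all (x,y), and let Y : [0,∞) → ℝ be a continuous function with Y(0) = 0, Y(t) > 0 for all t > 0, satisfying Y(t) = ∫₀ᵗ φ(X(s),Y(s)) Y(s)^γ ds for all t ≥ 0. Then (1−γ) c₁ t ≤ Y(t)^{1−γ} ≤ (1−γ) c₂ t for all t ≥ 0. -/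
open MeasureTheory Set

/-- Two-sided growth bound for the extremal solution of the degenerate ODE
`Y(t) = ∫₀ᵗ φ(X(s),Y(s)) Y(s)^γ ds` with `c₁ ≤ φ ≤ c₂`:
`(1-γ) c₁ t ≤ Y(t)^{1-γ} ≤ (1-γ) c₂ t` for all `t ≥ 0`. -/
theorem stmt15 (d : ℕ) (γ c₁ c₂ : ℝ) (hγ : γ ∈ Set.Ioo (0:ℝ) 1)
    (hc₁ : 0 < c₁) (hc : c₁ ≤ c₂)
    (X : ℝ → EuclideanSpace ℝ (Fin d)) (hX : ContinuousOn X (Ici 0))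
    (φ : EuclideanSpace ℝ (Fin d) × ℝ → ℝ) (hφ : Continuous φ)
    (hφb : ∀ p, φ p ∈ Icc c₁ c₂)
    (Y : ℝ → ℝ) (hY : ContinuousOn Y (Ici 0)) (hY0 : Y 0 = 0)
    (hYpos : ∀ t > (0:ℝ), 0 < Y t)
    (heq : ∀ t ≥ (0:ℝ), Y t = ∫ s in (0:ℝ)..t, φ (X s, Y s) * (Y s) ^ γ) :
    ∀ t ≥ (0:ℝ), (1-γ) * c₁ * t ≤ (Y t) ^ (1-γ) ∧ (Y t) ^ (1-γ) ≤ (1-γ) * c₂ * t := by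
  obtain ⟨hγ0, hγ1⟩ := hγ
  have h1γ : (0:ℝ) < 1 - γ := by linarith
  set f : ℝ → ℝ := fun s => φ (X s, Y s) * Y s ^ γ with hfdef
  have hfc : ContinuousOn f (Ici 0) := by
    apply ContinuousOn.mul
    · exact hφ.comp_continuousOn (hX.prodMk hY)
    · exact hY.rpow_const (fun x _ => Or.inr hγ0.le)
  -- derivative of Y on (0,∞)
  have hYd : ∀ x ∈ Ioi (0:ℝ), HasDerivAt Y (f x) x := by
    intro x hx
    have hx0 : (0:ℝ) < x := hx
    have hmem : Ici (0:ℝ) ∈ nhds x := Ici_mem_nhds hx0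
    have hint : IntervalIntegrable f volume 0 x := by
      apply ContinuousOn.intervalIntegrable
      apply hfc.mono
      rw [uIcc_of_le hx0.le]
      exact Icc_subset_Ici_self
    have hca : ContinuousAt f x := hfc.continuousAt hmem
    have hms : StronglyMeasurableAtFilter f (nhds x) volume :=
      (hfc.mono (Ioi_subset_Ici le_rfl)).stronglyMeasurableAtFilter isOpen_Ioi x hx
    have hF : HasDerivAt (fun u => ∫ s in (0:ℝ)..u, f s) (f x) x :=
      intervalIntegral.integral_hasDerivAt_right hint hms hca
    apply hF.congr_of_eventuallyEq
    filter_upwards [hmem] with u hu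
    exact heq u hu
  set Z : ℝ → ℝ := fun t => Y t ^ (1-γ) with hZdef
  have hZc : ContinuousOn Z (Ici 0) := hY.rpow_const (fun x _ => Or.inr h1γ.le)
  have hZ0 : Z 0 = 0 := by
    simp only [hZdef, hY0]
    exact Real.zero_rpow h1γ.ne'
  have hZd : ∀ x ∈ Ioi (0:ℝ), HasDerivAt Z ((1-γ) * φ (X x, Y x)) x := by
    intro x hx
    have hYx : 0 < Y x := hYpos x hx
    have h1 : HasDerivAt (fun y : ℝ => y ^ (1-γ)) ((1-γ) * Y x ^ (1-γ-1)) (Y x) :=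
      Real.hasDerivAt_rpow_const (Or.inl hYx.ne')
    have h2 := h1.comp x (hYd x hx)
    have key : Y x ^ (1-γ-1) * Y x ^ γ = 1 := by
      rw [← Real.rpow_add hYx]
      norm_num
    have : (1-γ) * Y x ^ (1-γ-1) * f x = (1-γ) * φ (X x, Y x) := by
      simp only [hfdef]
      calc (1-γ) * Y x ^ (1-γ-1) * (φ (X x, Y x) * Y x ^ γ)
          = (1-γ) * φ (X x, Y x) * (Y x ^ (1-γ-1) * Y x ^ γ) := by ring
        _ = (1-γ) * φ (X x, Y x) := by rw [key]; ring
    rw [← this]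
    exact h2
  -- lower bound monotonicity
  have hmono₁ : MonotoneOn (fun t => Z t - (1-γ)*c₁*t) (Ici 0) := by
    have hderiv : ∀ x ∈ Ioi (0:ℝ),
        HasDerivAt (fun t => Z t - (1-γ)*c₁*t) ((1-γ) * φ (X x, Y x) - (1-γ)*c₁) x := by
      intro x hx
      exact (hZd x hx).sub (by simpa using (hasDerivAt_id x).const_mul ((1-γ)*c₁))
    apply monotoneOn_of_deriv_nonneg (convex_Ici 0)
    · exact hZc.sub ((continuous_const.mul continuous_id).continuousOn)
    · rw [interior_Ici]
      intro x hx
      exact ((hderiv x hx).differentiableAt).differentiableWithinAt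
    · rw [interior_Ici]
      intro x hx
      rw [(hderiv x hx).deriv]
      have h := (hφb (X x, Y x)).1
      nlinarith
  have hmono₂ : MonotoneOn (fun t => (1-γ)*c₂*t - Z t) (Ici 0) := by
    have hderiv : ∀ x ∈ Ioi (0:ℝ),
        HasDerivAt (fun t => (1-γ)*c₂*t - Z t) ((1-γ)*c₂ - (1-γ) * φ (X x, Y x)) x := by
      intro x hx
      exact (by simpa using (hasDerivAt_id x).const_mul ((1-γ)*c₂) :
        HasDerivAt (fun t => (1-γ)*c₂*t) ((1-γ)*c₂) x).sub (hZd x hx)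
    apply monotoneOn_of_deriv_nonneg (convex_Ici 0)
    · exact ((continuous_const.mul continuous_id).continuousOn).sub hZc
    · rw [interior_Ici]
      intro x hx
      exact ((hderiv x hx).differentiableAt).differentiableWithinAt
    · rw [interior_Ici]
      intro x hx
      rw [(hderiv x hx).deriv]
      have h := (hφb (X x, Y x)).2
      nlinarith
  intro t ht
  have h1 := hmono₁ (self_mem_Ici) ht ht
  have h2 := hmono₂ (self_mem_Ici) ht ht
  simp only [hZ0, mul_zero, sub_zero, zero_sub] at h1 h2
  constructor
  · linarith
  · linarith
end
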